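/- arXiv:1811.03942 — 9 statements merged into one kernel-verified Lean document; each statement's English description precedes it below -/
import Mathlib

section
/- Let (X,T) be a minimal Cantor system, let U ⊆ X be a clopen set and let p ≥ 1 be an integer. Then for all x, y ∈ X, PS_p(x,U) = ∅ if and only if PS_p(y,U) = ∅. -/
def periodSkeleton {X : Type*} (T : X ≃ X) (p : ℕ) (x : X) (U : Set X) : Set ℤ :=
  {k : ℤ | ∀ n : ℤ, (T ^ (k + n * p)) x ∈ U}

private lemma zpow_apply_apply {X : Type*} (T : X ≃ X) (a b : ℤ) (z : X) :
    (T ^ a) ((T ^ b) z) = (T ^ (a + b)) z := by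
  rw [zpow_add]; rfl

private lemma shift_mem {X : Type*} (T : X ≃ X) (p : ℕ) (z : X) (U : Set X) (k m : ℤ) :
    k ∈ periodSkeleton T p ((T ^ m) z) U ↔ k + m ∈ periodSkeleton T p z U := by
  simp only [periodSkeleton, Set.mem_setOf_eq]
  constructor <;> intro h n <;> have := h n
  · rwa [zpow_apply_apply, show k + n * p + m = k + m + n * p by ring] at this
  · rwa [zpow_apply_apply, show k + n * p + m = k + m + n * p by ring]

private lemma period_mem {X : Type*} (T : X ≃ X) (p : ℕ) (z : X) (U : Set X) (k j : ℤ) :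
    k + j * p ∈ periodSkeleton T p z U ↔ k ∈ periodSkeleton T p z U := by
  simp only [periodSkeleton, Set.mem_setOf_eq]
  constructor <;> intro h n
  · have := h (n - j)
    rwa [show k + j * p + (n - j) * p = k + n * p by ring] at this
  · have := h (n + j)
    rwa [show k + (n + j) * p = k + j * p + n * p by ring] at this

private lemma cont_zpow {X : Type*} [TopologicalSpace X] (T : X ≃ₜ X) (m : ℤ) :
    Continuous fun z => (T.toEquiv ^ m) z := by
  induction m using Int.induction_on with
  | zero => simpa using continuous_id'
  | succ n ih =>
      have e : (T.toEquiv ^ ((n : ℤ) + 1)) = T.toEquiv ^ (n : ℤ) * T.toEquiv :=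
        zpow_add_one _ _
      simp only [e, Equiv.Perm.mul_apply]
      exact ih.comp T.continuous
  | pred n ih =>
      have e : (T.toEquiv ^ (-(n : ℤ) - 1)) = T.toEquiv ^ (-(n : ℤ)) * T.toEquiv⁻¹ :=
        zpow_sub_one _ _
      have e2 : ∀ z : X, T.toEquiv⁻¹ z = T.symm z := fun z => rfl
      simp only [e, Equiv.Perm.mul_apply, e2]
      exact ih.comp T.symm.continuous

/-- Let `(X,T)` be a minimal Cantor system, `U ⊆ X` clopen, `p ≥ 1`. Then for all
`x, y ∈ X`, `PS_p(x,U) = ∅` iff `PS_p(y,U) = ∅`. -/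
theorem skeleton_empty_iff
    {X : Type*} [MetricSpace X] [CompactSpace X] [Nonempty X]
    [TotallyDisconnectedSpace X]
    (hperf : ∀ x : X, (nhdsWithin x {x}ᶜ).NeBot)
    (T : X ≃ₜ X)
    (hmin : ∀ x : X, Dense (Set.range fun n : ℤ => (T.toEquiv ^ n) x))
    (U : Set X) (hU : IsClopen U)
    (p : ℕ) (hp : 1 ≤ p) (x y : X) :
    periodSkeleton T.toEquiv p x U = ∅ ↔ periodSkeleton T.toEquiv p y U = ∅ := by
  have key : ∀ a b : X, (periodSkeleton T.toEquiv p a U).Nonempty →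
      (periodSkeleton T.toEquiv p b U).Nonempty := by
    intro a b ⟨k, hk⟩
    -- the closed invariant set
    set A : Set X :=
      ⋃ k ∈ Set.Ico (0 : ℤ) (p : ℤ), ⋂ n : ℤ,
        (fun z => (T.toEquiv ^ (k + n * p)) z) ⁻¹' U with hA
    have memA : ∀ z : X, z ∈ A ↔ (periodSkeleton T.toEquiv p z U).Nonempty := by
      intro z
      constructor
      · rintro hz
        simp only [hA, Set.mem_iUnion, Set.mem_iInter, Set.mem_preimage] at hz
        obtain ⟨j, _, hj⟩ := hz
        exact ⟨j, hj⟩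
      · rintro ⟨j, hj⟩
        have hp0 : (0 : ℤ) < (p : ℤ) := by exact_mod_cast hp
        have hj' : j % p ∈ periodSkeleton T.toEquiv p z U := by
          have := (period_mem T.toEquiv p z U (j % p) (j / p)).mp
          rw [show j % p + j / p * (p : ℤ) = j by rw [mul_comm]; exact Int.emod_add_mul_ediv j p]
            at this
          exact this hj
        simp only [hA, Set.mem_iUnion, Set.mem_iInter, Set.mem_preimage]
        exact ⟨j % p, ⟨Int.emod_nonneg j hp0.ne', Int.emod_lt_of_pos j hp0⟩, fun n => hj' n⟩
    have hclosed : IsClosed A := by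
      apply Set.Finite.isClosed_biUnion (Set.finite_Ico _ _)
      intro i _
      exact isClosed_iInter fun n => hU.isClosed.preimage (cont_zpow T _)
    have horb : ∀ m : ℤ, (T.toEquiv ^ m) a ∈ A := by
      intro m
      rw [memA]
      exact ⟨k - m, (shift_mem T.toEquiv p a U (k - m) m).mpr (by simpa using hk)⟩
    have : Set.univ ⊆ A := by
      have : closure (Set.range fun n : ℤ => (T.toEquiv ^ n) a) ⊆ A :=
        hclosed.closure_subset_iff.mpr (by rintro _ ⟨m, rfl⟩; exact horb m)
      rwa [(hmin a).closure_eq] at this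
    exact (memA b).mp (this (Set.mem_univ b))
  rw [← Set.not_nonempty_iff_eq_empty, ← Set.not_nonempty_iff_eq_empty]
  exact not_congr ⟨key x y, key y x⟩
end

section
/- Let (X,T) be a minimal topological dynamical system and p ≥ 2 an integer. The following are equivalent: (1) λ = exp(2iπ/p) is an eigenvalue of (X,T); (2) p is an essential period of some point of X for some clopen set U (i.e. p ∈ ℙ(X,T)); (3) there exists a closed subset V ⊆ X such that the sets V, T^{-1}V, …, T^{-p+1}V are pairwise disjoint and their union is X; (4) there is a factor map from (X,T) onto the cyclic system (ℤ/pℤ, R), where R is addition of 1 modulo p. -/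
/-- `p` is an essential period of `x` for `U`: the skeleton is nonempty and `p`
divides every `q` with `PS_p(x,U) = PS_p(x,U) − q`. -/
def IsEssentialPeriod {X : Type*} (T : X ≃ X) (p : ℕ) (x : X) (U : Set X) : Prop :=
  periodSkeleton T p x U ≠ ∅ ∧
    ∀ q : ℤ, periodSkeleton T p x U = (fun k => k - q) '' periodSkeleton T p x U →
      (p : ℤ) ∣ q

set_option linter.unusedSectionVars false
set_option linter.unusedVariables false

namespace EigenTFAE

variable {X : Type*} [MetricSpace X] [CompactSpace X] (T : X ≃ₜ X)

lemma zpow_apply_add (a b : ℤ) (y : X) :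
    (T.toEquiv ^ a) ((T.toEquiv ^ b) y) = (T.toEquiv ^ (a + b)) y := by
  rw [zpow_add, Equiv.Perm.mul_apply]

lemma continuous_zpow (k : ℤ) : Continuous fun y : X => (T.toEquiv ^ k) y := by
  induction k using Int.induction_on with
  | zero => simpa using (continuous_id' : Continuous fun y : X => y)
  | succ n ih =>
      have h : ∀ y : X, (T.toEquiv ^ ((n:ℤ)+1)) y = (T.toEquiv ^ (n:ℤ)) (T y) := by
        intro y; rw [zpow_add_one, Equiv.Perm.mul_apply]; rfl
      simp only [h]; exact ih.comp T.continuous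
  | pred n ih =>
      have h : ∀ y : X, (T.toEquiv ^ (-(n:ℤ)-1)) y = (T.toEquiv ^ (-(n:ℤ))) (T.symm y) := by
        intro y; rw [zpow_sub_one, Equiv.Perm.mul_apply]; rfl
      simp only [h]; exact ih.comp T.symm.continuous

lemma eigen_pow (f : C(X,ℂ)) (lam : ℂ) (hfe : ∀ x, f (T x) = lam * f x) :
    ∀ (n : ℕ) (x : X), f ((T.toEquiv ^ n) x) = lam ^ n * f x := by
  intro n
  induction n with
  | zero => intro x; simp
  | succ n ih =>
      intro x
      have h1 : (T.toEquiv ^ (n+1)) x = (T.toEquiv ^ n) (T x) := by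
        rw [pow_succ, Equiv.Perm.mul_apply]; rfl
      rw [h1, ih, hfe, pow_succ]; ring

lemma invariant_const (hmin : ∀ x : X, Dense (Set.range fun n : ℤ => (T.toEquiv ^ n) x))
    (g : X → ℂ) (hg : Continuous g) (hinv : ∀ x, g (T x) = g x) :
    ∀ y z : X, g y = g z := by
  have horb : ∀ (n : ℤ) (z : X), g ((T.toEquiv ^ n) z) = g z := by
    intro n
    induction n using Int.induction_on with
    | zero => intro z; simp
    | succ n ih =>
        intro z
        have h1 : (T.toEquiv ^ ((n:ℤ)+1)) z = (T.toEquiv ^ (n:ℤ)) (T z) := by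
          rw [zpow_add_one, Equiv.Perm.mul_apply]; rfl
        rw [h1, ih, hinv]
    | pred n ih =>
        intro z
        have h1 : (T.toEquiv ^ (-(n:ℤ)-1)) z = (T.toEquiv ^ (-(n:ℤ))) (T.symm z) := by
          rw [zpow_sub_one, Equiv.Perm.mul_apply]; rfl
        have h2 : g (T.symm z) = g z := by
          have h := hinv (T.symm z); rw [T.apply_symm_apply] at h; exact h.symm
        rw [h1, ih, h2]
  intro y z
  have hcl : IsClosed {w : X | g w = g z} := isClosed_eq hg continuous_const
  have hsub : Set.range (fun n : ℤ => (T.toEquiv ^ n) z) ⊆ {w | g w = g z} := by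
    rintro _ ⟨n, rfl⟩; exact horb n z
  have h3 : closure (Set.range fun n : ℤ => (T.toEquiv ^ n) z) ⊆ {w | g w = g z} :=
    closure_minimal hsub hcl
  exact h3 (by rw [(hmin z).closure_eq]; trivial)

lemma imp13 (hmin : ∀ x : X, Dense (Set.range fun n : ℤ => (T.toEquiv ^ n) x))
    (p : ℕ) (hp : 2 ≤ p)
    (h1 : ∃ f : C(X, ℂ), f ≠ 0 ∧
        ∀ x : X, f (T x) = Complex.exp (2 * Real.pi * Complex.I / p) * f x) :
    ∃ V : Set X, IsClosed V ∧
      (∀ i j : Fin p, i ≠ j →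
        Disjoint ((fun x => (T.toEquiv ^ (i : ℤ)) x) ⁻¹' V)
          ((fun x => (T.toEquiv ^ (j : ℤ)) x) ⁻¹' V)) ∧
      (⋃ i : Fin p, (fun x => (T.toEquiv ^ (i : ℤ)) x) ⁻¹' V) = Set.univ := by
  obtain ⟨f, hf0, hfe⟩ := h1
  set lam := Complex.exp (2 * Real.pi * Complex.I / p) with hlam
  have hp0 : p ≠ 0 := by omega
  haveI : NeZero p := ⟨hp0⟩
  have hprim : IsPrimitiveRoot lam p := Complex.isPrimitiveRoot_exp p hp0
  have hlamp : lam ^ p = 1 := hprim.pow_eq_one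
  have hiter := eigen_pow T f lam hfe
  have hginv : ∀ x : X, (f (T x))^p = (f x)^p := by
    intro x; rw [hfe, mul_pow, hlamp, one_mul]
  have hconst := invariant_const T hmin (fun x => (f x)^p) (f.continuous.pow p) hginv
  obtain ⟨x₀, hx₀⟩ := DFunLike.ne_iff.mp hf0
  have hx₀' : f x₀ ≠ 0 := by simpa using hx₀
  have hc0 : f x₀ ^ p ≠ 0 := pow_ne_zero _ hx₀'
  have hfp : ∀ x : X, f x ^ p = f x₀ ^ p := fun x => hconst x x₀
  have hfne : ∀ x : X, f x ≠ 0 := by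
    intro x hx
    exact hc0 (by rw [← hfp x, hx, zero_pow hp0])
  refine ⟨f ⁻¹' {f x₀}, isClosed_singleton.preimage f.continuous, ?_, ?_⟩
  · intro i j hij
    rw [Set.disjoint_left]
    intro x hxi hxj
    apply hij
    have h1 : f ((T.toEquiv ^ ((i:ℕ):ℤ)) x) = f x₀ := hxi
    have h2 : f ((T.toEquiv ^ ((j:ℕ):ℤ)) x) = f x₀ := hxj
    rw [zpow_natCast, hiter] at h1
    rw [zpow_natCast, hiter] at h2
    have h3 : lam ^ (i:ℕ) = lam ^ (j:ℕ) := mul_right_cancel₀ (hfne x) (h1.trans h2.symm)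
    exact Fin.ext (hprim.pow_inj i.isLt j.isLt h3)
  · ext x
    simp only [Set.mem_iUnion, Set.mem_univ, iff_true, Set.mem_preimage,
      Set.mem_singleton_iff]
    have h1 : (f x₀ / f x) ^ p = 1 := by rw [div_pow, hfp x, div_self hc0]
    obtain ⟨i, hi, hpow⟩ := hprim.eq_pow_of_pow_eq_one h1
    refine ⟨⟨i, hi⟩, ?_⟩
    show f ((T.toEquiv ^ ((i:ℕ):ℤ)) x) = f x₀
    rw [zpow_natCast, hiter, hpow, div_mul_cancel₀ _ (hfne x)]


lemma imp34 [Nonempty X] (p : ℕ) (hp : 2 ≤ p)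
    (h3 : ∃ V : Set X, IsClosed V ∧
      (∀ i j : Fin p, i ≠ j →
        Disjoint ((fun x => (T.toEquiv ^ (i : ℤ)) x) ⁻¹' V)
          ((fun x => (T.toEquiv ^ (j : ℤ)) x) ⁻¹' V)) ∧
      (⋃ i : Fin p, (fun x => (T.toEquiv ^ (i : ℤ)) x) ⁻¹' V) = Set.univ) :
    ∃ f : X → ZMod p, (∀ s : Set (ZMod p), IsOpen (f ⁻¹' s)) ∧
      Function.Surjective f ∧ ∀ x : X, f (T x) = f x + 1 := by
  classical
  obtain ⟨V, hVcl, hdis, hcov⟩ := h3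
  haveI : NeZero p := ⟨by omega⟩
  set W : Fin p → Set X := fun i => (fun x => (T.toEquiv ^ (i : ℤ)) x) ⁻¹' V with hW
  have hWmem : ∀ (y : X) (i : Fin p), y ∈ W i ↔ (T.toEquiv ^ ((i:ℕ):ℤ)) y ∈ V := by
    intro y i; rfl
  have hWcl : ∀ i, IsClosed (W i) := fun i => hVcl.preimage (continuous_zpow T _)
  have idx : ∀ y : X, ∃ i : Fin p, y ∈ W i := by
    intro y
    have hy : y ∈ ⋃ i, W i := by rw [hW, hcov]; trivial
    exact Set.mem_iUnion.mp hy
  have uniq : ∀ {y : X} {i j : Fin p}, y ∈ W i → y ∈ W j → i = j := by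
    intro y i j hi hj
    by_contra hne
    exact (Set.disjoint_left.mp (hdis i j hne)) hi hj
  choose ind hind using idx
  set F : X → ZMod p := fun y => -(((ind y : Fin p) : ℕ) : ZMod p) with hF
  have Fspec : ∀ {y : X} {i : Fin p}, y ∈ W i → F y = -(((i:ℕ)) : ZMod p) := by
    intro y i hi
    rw [hF]
    simp only []
    rw [uniq (hind y) hi]
  have hstep : ∀ y : X, F (T y) = F y + 1 := by
    intro y
    set i := ind y with hi
    set j := ind (T y) with hj
    have hyi : y ∈ W i := hind y
    have hyj : (T.toEquiv ^ ((j:ℕ):ℤ)) (T y) ∈ V := hind (T y)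
    have hyj' : (T.toEquiv ^ (((j:ℕ):ℤ) + 1)) y ∈ V := by
      have h1 : (T.toEquiv ^ (((j:ℕ):ℤ) + 1)) y
          = (T.toEquiv ^ ((j:ℕ):ℤ)) ((T.toEquiv ^ (1:ℤ)) y) := by
        rw [zpow_apply_add]
      rw [h1, zpow_one]
      exact hyj
    by_cases hcase : (j:ℕ) + 1 < p
    · -- y ∈ W ⟨j+1, _⟩
      have hmem : y ∈ W ⟨(j:ℕ)+1, hcase⟩ := by
        rw [hWmem]
        have : (((((j:ℕ)+1 : ℕ)):ℤ)) = ((j:ℕ):ℤ) + 1 := by push_cast; ring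
        rw [show (((⟨(j:ℕ)+1, hcase⟩ : Fin p) : ℕ) : ℤ) = ((j:ℕ):ℤ) + 1 from by push_cast; ring]
        exact hyj'
      have hieq : i = ⟨(j:ℕ)+1, hcase⟩ := uniq hyi hmem
      rw [Fspec (hind (T y)), Fspec hyi, hieq]
      push_cast
      ring
    · -- j = p - 1, show i = 0
      have hjval : (j:ℕ) = p - 1 := by have := j.isLt; omega
      have hizero : (i:ℕ) = 0 := by
        by_contra hiz
        have hipos : 1 ≤ (i:ℕ) := by omega
        have hmem : T y ∈ W ⟨(i:ℕ)-1, by have := i.isLt; omega⟩ := by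
          rw [hWmem]
          have h1 : (((((i:ℕ)-1 : ℕ)):ℤ)) + 1 = ((i:ℕ):ℤ) := by
            push_cast [hipos]; ring
          have h2 : (T.toEquiv ^ ((((i:ℕ)-1 : ℕ)):ℤ)) (T y)
              = (T.toEquiv ^ (((((i:ℕ)-1 : ℕ)):ℤ) + 1)) y := by
            rw [← zpow_apply_add, zpow_one]
            rfl
          rw [h2, h1]
          exact hyi
        have h6 := uniq (hind (T y)) hmem
        have h7 : (j:ℕ) = (i:ℕ) - 1 := by rw [hj, h6]
        have := i.isLt
        omega
      rw [Fspec (hind (T y)), Fspec hyi, hizero, hjval]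
      have hcast : (((p-1:ℕ)) : ZMod p) = -1 := by
        have h1 : ((p-1:ℕ) : ZMod p) = (p : ZMod p) - 1 := by
          push_cast [Nat.cast_sub (by omega : 1 ≤ p)]; ring
        rw [h1, ZMod.natCast_self]; ring
      rw [hcast]
      simp
  -- fibers
  have hfib : ∀ a : ZMod p, F ⁻¹' {a} = W ⟨(-a).val, ZMod.val_lt _⟩ := by
    intro a
    ext y
    simp only [Set.mem_preimage, Set.mem_singleton_iff]
    constructor
    · intro h
      have hy : y ∈ W (ind y) := hind y
      have h2 : (((ind y : ℕ)) : ZMod p) = -a := by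
        rw [Fspec hy] at h
        rw [← h]; ring
      have h3 : (ind y : ℕ) = (-a).val := by
        rw [← h2, ZMod.val_cast_of_lt (ind y).isLt]
      have h4 : ind y = ⟨(-a).val, ZMod.val_lt _⟩ := Fin.ext h3
      rw [← h4]; exact hy
    · intro h
      rw [Fspec h]
      simp only []
      rw [ZMod.natCast_rightInverse (-a)]
      ring
  have hfibcl : ∀ a : ZMod p, IsClosed (F ⁻¹' {a}) := by
    intro a; rw [hfib]; exact hWcl _
  have hfibop : ∀ a : ZMod p, IsOpen (F ⁻¹' {a}) := by
    intro a
    rw [← isClosed_compl_iff]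
    have : (F ⁻¹' {a})ᶜ = ⋃ b ∈ ({a}ᶜ : Set (ZMod p)), F ⁻¹' {b} := by
      ext y
      simp only [Set.mem_compl_iff, Set.mem_preimage, Set.mem_singleton_iff,
        Set.mem_iUnion]
      constructor
      · intro h; exact ⟨F y, h, rfl⟩
      · rintro ⟨b, hb, rfl⟩; exact hb
    rw [this]
    exact Set.Finite.isClosed_biUnion (Set.toFinite _) (fun b _ => hfibcl b)
  refine ⟨F, ?_, ?_, hstep⟩
  · intro s
    have : F ⁻¹' s = ⋃ a ∈ s, F ⁻¹' {a} := by
      ext y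
      simp only [Set.mem_preimage, Set.mem_iUnion, Set.mem_singleton_iff]
      constructor
      · intro h; exact ⟨F y, h, rfl⟩
      · rintro ⟨a, ha, rfl⟩; exact ha
    rw [this]
    exact isOpen_biUnion (fun a _ => hfibop a)
  · intro a
    obtain ⟨y₀⟩ := (inferInstance : Nonempty X)
    have hv : (T.toEquiv ^ ((ind y₀ : ℕ):ℤ)) y₀ ∈ V := hind y₀
    set v := (T.toEquiv ^ ((ind y₀ : ℕ):ℤ)) y₀ with hvdef
    set m : ℕ := (-a).val with hm
    refine ⟨(T.toEquiv ^ (-(m:ℤ))) v, ?_⟩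
    have hmem : (T.toEquiv ^ (-(m:ℤ))) v ∈ W ⟨m, ZMod.val_lt _⟩ := by
      rw [hWmem]
      rw [zpow_apply_add,
        show ((((⟨m, ZMod.val_lt _⟩ : Fin p) : ℕ):ℤ) + -(m:ℤ)) = 0 from by simp,
        zpow_zero]
      exact hv
    rw [Fspec hmem]
    simp only []
    rw [hm, ZMod.natCast_rightInverse (-a)]
    ring

lemma zstep (p : ℕ) (f : X → ZMod p) (hstep : ∀ x : X, f (T x) = f x + 1) :
    ∀ (k : ℤ) (y : X), f ((T.toEquiv ^ k) y) = f y + (k : ZMod p) := by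
  intro k
  induction k using Int.induction_on with
  | zero => intro y; simp
  | succ n ih =>
      intro y
      have h1 : (T.toEquiv ^ ((n:ℤ)+1)) y = (T.toEquiv ^ (n:ℤ)) (T y) := by
        rw [zpow_add_one, Equiv.Perm.mul_apply]; rfl
      rw [h1, ih, hstep]
      push_cast
      ring
  | pred n ih =>
      intro y
      have h1 : (T.toEquiv ^ (-(n:ℤ)-1)) y = (T.toEquiv ^ (-(n:ℤ))) (T.symm y) := by
        rw [zpow_sub_one, Equiv.Perm.mul_apply]; rfl
      have h2 : f (T.symm y) = f y - 1 := by
        have := hstep (T.symm y)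
        rw [T.apply_symm_apply] at this
        rw [this]; ring
      rw [h1, ih, h2]
      push_cast
      ring

lemma imp42 [Nonempty X] (p : ℕ) (hp : 2 ≤ p)
    (h4 : ∃ f : X → ZMod p, (∀ s : Set (ZMod p), IsOpen (f ⁻¹' s)) ∧
      Function.Surjective f ∧ ∀ x : X, f (T x) = f x + 1) :
    ∃ (x : X) (U : Set X), IsClopen U ∧ IsEssentialPeriod T.toEquiv p x U := by
  obtain ⟨f, hop, hsurj, hstep⟩ := h4
  haveI : NeZero p := ⟨by omega⟩
  obtain ⟨x, hx⟩ := hsurj 0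
  have hzs := zstep T p f hstep
  refine ⟨x, f ⁻¹' {0}, ⟨?_, hop _⟩, ?_, ?_⟩
  · -- closed
    rw [← isOpen_compl_iff, ← Set.preimage_compl]
    exact hop _
  · -- nonempty
    have h0 : (0:ℤ) ∈ periodSkeleton T.toEquiv p x (f ⁻¹' {0}) := by
      intro n
      show f ((T.toEquiv ^ ((0:ℤ) + n * p)) x) ∈ ({0} : Set (ZMod p))
      rw [hzs]
      simp [hx, ZMod.natCast_self]
    exact Set.nonempty_iff_ne_empty.mp ⟨0, h0⟩
  · -- essential
    intro q hq
    have hskel : ∀ k : ℤ, k ∈ periodSkeleton T.toEquiv p x (f ⁻¹' {0}) ↔ (p:ℤ) ∣ k := by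
      intro k
      constructor
      · intro h
        have h0 := h 0
        have h1 : f ((T.toEquiv ^ (k + 0 * p)) x) = 0 := h0
        rw [hzs, hx, zero_add] at h1
        rw [zero_mul, add_zero] at h1
        exact (ZMod.intCast_zmod_eq_zero_iff_dvd k p).mp h1
      · intro hdvd n
        show f ((T.toEquiv ^ (k + n * p)) x) ∈ ({0} : Set (ZMod p))
        rw [hzs, hx, zero_add]
        have h1 : ((k + n * p : ℤ) : ZMod p) = 0 := by
          push_cast
          rw [ZMod.natCast_self, (ZMod.intCast_zmod_eq_zero_iff_dvd k p).mpr hdvd]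
          ring
        simp [h1]
    have h0 : (0:ℤ) ∈ periodSkeleton T.toEquiv p x (f ⁻¹' {0}) := (hskel 0).mpr (dvd_zero _)
    rw [hq] at h0
    obtain ⟨j, hj, hj0⟩ := h0
    have hjq : j = q := by
      have : j - q = 0 := hj0
      omega
    rw [← hjq]
    exact (hskel j).mp hj

lemma imp41 [Nonempty X] (p : ℕ) (hp : 2 ≤ p)
    (h4 : ∃ f : X → ZMod p, (∀ s : Set (ZMod p), IsOpen (f ⁻¹' s)) ∧
      Function.Surjective f ∧ ∀ x : X, f (T x) = f x + 1) :
    ∃ f : C(X, ℂ), f ≠ 0 ∧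
      ∀ x : X, f (T x) = Complex.exp (2 * Real.pi * Complex.I / p) * f x := by
  obtain ⟨f, hop, hsurj, hstep⟩ := h4
  haveI : NeZero p := ⟨by omega⟩
  haveI : Fact (1 < p) := ⟨by omega⟩
  set χ : ZMod p → ℂ := fun a => Complex.exp (2 * Real.pi * Complex.I * a.val / p) with hχ
  have hcont : Continuous fun x => χ (f x) := by
    rw [continuous_def]
    intro s hs
    exact hop (χ ⁻¹' s)
  have hp0 : (p:ℂ) ≠ 0 := Nat.cast_ne_zero.mpr (by omega)
  refine ⟨⟨fun x => χ (f x), hcont⟩, ?_, ?_⟩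
  · rw [DFunLike.ne_iff]
    refine ⟨Classical.arbitrary X, ?_⟩
    show χ (f _) ≠ 0
    exact Complex.exp_ne_zero _
  · intro x
    show χ (f (T x)) = _ * χ (f x)
    rw [hstep]
    set a := f x with ha
    rw [hχ]
    simp only []
    rw [← Complex.exp_add, Complex.exp_eq_exp_iff_exists_int]
    set q : ℕ := (a.val + 1) / p with hqdef
    refine ⟨-(q:ℤ), ?_⟩
    have hval : ((a+1).val : ℂ) = (a.val : ℂ) + 1 - q * p := by
      have hmod := Nat.div_add_mod (a.val + 1) p
      have hle : p * q ≤ a.val + 1 := Nat.mul_div_le (a.val+1) p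
      have hv : (a+1).val = (a.val + 1) % p := by
        rw [ZMod.val_add, ZMod.val_one]
      have h2 : (a+1).val + p * q = a.val + 1 := by
        rw [hv, hqdef]; exact Nat.mod_add_div _ _
      have h3 := congrArg (Nat.cast : ℕ → ℂ) h2
      have h4 : (((a+1).val : ℕ) : ℂ) + (p:ℂ) * q = (a.val : ℕ) + 1 := by
        exact_mod_cast h3
      linear_combination h4
    rw [hval]
    push_cast
    field_simp
    ring

lemma imp24 (hmin : ∀ x : X, Dense (Set.range fun n : ℤ => (T.toEquiv ^ n) x))
    (p : ℕ) (hp : 2 ≤ p)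
    (h2 : ∃ (x : X) (U : Set X), IsClopen U ∧ IsEssentialPeriod T.toEquiv p x U) :
    ∃ f : X → ZMod p, (∀ s : Set (ZMod p), IsOpen (f ⁻¹' s)) ∧
      Function.Surjective f ∧ ∀ x : X, f (T x) = f x + 1 := by
  classical
  obtain ⟨x, U, hU, hne, hessen⟩ := h2
  haveI : NeZero p := ⟨by omega⟩
  set S : X → ℤ → Prop := fun y k => ∀ n : ℤ, (T.toEquiv ^ (k + n * p)) y ∈ U with hSdef
  have hval : ∀ a : ZMod p, ((a.val : ℕ) : ZMod p) = a := fun a => ZMod.natCast_rightInverse a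
  -- shift invariance
  have hSshift : ∀ (y : X) (k m : ℤ), S y (k + m * p) ↔ S y k := by
    intro y k m
    constructor
    · intro h n
      have h2 := h (n - m)
      rwa [show k + m * p + (n - m) * p = k + n * p from by ring] at h2
    · intro h n
      have h2 := h (n + m)
      rwa [show k + (n + m) * p = k + m * p + n * p from by ring] at h2
  have hScong : ∀ (y : X) (k k' : ℤ), ((k : ZMod p) = (k' : ZMod p)) → (S y k ↔ S y k') := by
    intro y k k' hkk
    have hdvd : (p:ℤ) ∣ k' - k := Int.ModEq.dvd ((ZMod.intCast_eq_intCast_iff _ _ _).mp hkk)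
    obtain ⟨m, hm⟩ := hdvd
    have hk' : k' = k + m * p := by linarith [hm]
    rw [hk']
    exact (hSshift y k m).symm
  have hStrans : ∀ (m : ℤ) (y : X) (k : ℤ), S ((T.toEquiv ^ m) y) k ↔ S y (k + m) := by
    intro m y k
    constructor
    · intro h n
      have h2 := h n
      rw [zpow_apply_add, show k + n * p + m = k + m + n * p from by ring] at h2
      exact h2
    · intro h n
      rw [zpow_apply_add, show k + n * p + m = k + m + n * p from by ring]
      exact h n
  have hSclosed : ∀ k : ℤ, IsClosed {y : X | S y k} := by
    intro k
    have heq : {y : X | S y k} = ⋂ n : ℤ, (fun y => (T.toEquiv ^ (k + n * p)) y) ⁻¹' U := by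
      ext y
      simp only [Set.mem_setOf_eq, Set.mem_iInter, Set.mem_preimage, hSdef]
    rw [heq]
    exact isClosed_iInter fun n => hU.isClosed.preimage (continuous_zpow T _)
  set d : X → ZMod p → Prop := fun y a => S y ((a.val : ℕ) : ℤ) with hddef
  have hSd : ∀ (y : X) (k : ℤ), S y k ↔ d y ((k : ZMod p)) := by
    intro y k
    apply hScong
    rw [Int.cast_natCast, hval]
  -- essentiality reformulated
  have hEss : ∀ q : ℤ, (∀ k : ℤ, S x k ↔ S x (k + q)) → (p:ℤ) ∣ q := by
    intro q hq
    apply hessen q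
    ext k
    simp only [Set.mem_image]
    constructor
    · intro hk
      exact ⟨k + q, (hq k).mp hk, by ring⟩
    · rintro ⟨j, hj, rfl⟩
      exact (hq (j - q)).mpr (by rwa [sub_add_cancel])
  -- key shift lemma
  have key_shift : ∀ e : ZMod p, (∀ b : ZMod p, d x b → d x (b + e)) → e = 0 := by
    intro e he
    have hQ : ∀ (n : ℕ) (b : ZMod p), d x b → d x (b + n • e) := by
      intro n
      induction n with
      | zero => intro b hb; simpa using hb
      | succ n ih =>
          intro b hb
          have h1 := he _ (ih b hb)
          rwa [succ_nsmul, ← add_assoc]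
    have hsm : ((p - 1 : ℕ)) • e = -e := by
      rw [nsmul_eq_mul]
      have h1 : ((p - 1 : ℕ) : ZMod p) = -1 := by
        rw [Nat.cast_sub (by omega : 1 ≤ p), ZMod.natCast_self]
        push_cast
        ring
      rw [h1]
      ring
    have hneg : ∀ b : ZMod p, d x (b + e) → d x b := by
      intro b hb
      have h2 := hQ (p - 1) (b + e) hb
      rwa [hsm, add_assoc, add_neg_cancel, add_zero] at h2
    have hiff : ∀ k : ℤ, S x k ↔ S x (k + (e.val : ℤ)) := by
      intro k
      rw [hSd x k, hSd x (k + (e.val : ℤ))]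
      have hcast : ((k + (e.val : ℤ) : ℤ) : ZMod p) = (k : ZMod p) + e := by
        push_cast
        rw [hval]
      rw [hcast]
      exact ⟨fun h => he _ h, fun h => hneg _ h⟩
    have hdvd : (p:ℤ) ∣ (e.val : ℤ) := hEss _ hiff
    have hdvd' : p ∣ e.val := Int.ofNat_dvd.mp hdvd
    have h0 : e.val = 0 := Nat.eq_zero_of_dvd_of_lt hdvd' (ZMod.val_lt e)
    rw [← hval e, h0]
    simp
  -- translation existence via minimality
  have htrans : ∀ y z : X, ∃ r : ZMod p, ∀ a : ZMod p, d y (a + r) → d z a := by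
    intro y z
    set E : ZMod p → Set X := fun r =>
      (fun m : ℤ => (T.toEquiv ^ m) y) '' {m : ℤ | ((m : ZMod p)) = r} with hEdef
    have hclosed : IsClosed (⋃ r : ZMod p, closure (E r)) :=
      isClosed_iUnion_of_finite fun r => isClosed_closure
    have hsub : Set.range (fun n : ℤ => (T.toEquiv ^ n) y) ⊆ ⋃ r : ZMod p, closure (E r) := by
      rintro _ ⟨m, rfl⟩
      exact Set.mem_iUnion.mpr ⟨(m : ZMod p), subset_closure ⟨m, rfl, rfl⟩⟩
    have hz : z ∈ ⋃ r : ZMod p, closure (E r) := by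
      have h1 : closure (Set.range fun n : ℤ => (T.toEquiv ^ n) y)
          ⊆ ⋃ r : ZMod p, closure (E r) := closure_minimal hsub hclosed
      exact h1 (by rw [(hmin y).closure_eq]; trivial)
    obtain ⟨r, hr⟩ := Set.mem_iUnion.mp hz
    refine ⟨r, ?_⟩
    intro a ha n
    -- goal : (T.toEquiv ^ ((a.val : ℤ) + n * p)) z ∈ U
    have hO : IsClosed ((fun w : X => (T.toEquiv ^ ((a.val : ℤ) + n * p)) w) ⁻¹' U) :=
      hU.isClosed.preimage (continuous_zpow T _)
    have hEO : E r ⊆ (fun w : X => (T.toEquiv ^ ((a.val : ℤ) + n * p)) w) ⁻¹' U := by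
      rintro _ ⟨m, hm, rfl⟩
      show (T.toEquiv ^ ((a.val : ℤ) + n * p)) ((T.toEquiv ^ m) y) ∈ U
      rw [zpow_apply_add]
      have hc : (((a.val : ℤ) + n * p + m : ℤ) : ZMod p) = (((a + r).val : ℤ) : ZMod p) := by
        push_cast
        rw [hval, hval, ZMod.natCast_self, hm]
        ring
      have hS1 : S y ((a.val : ℤ) + n * p + m) := (hScong y _ _ hc).mpr ha
      have := hS1 0
      rwa [zero_mul, add_zero] at this
    exact closure_minimal hEO hO hr
  -- the unique rotation
  have hspec : ∀ y : X, ∃ r : ZMod p, ∀ a : ZMod p, d y a ↔ d x (a + r) := by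
    intro y
    obtain ⟨r, hr⟩ := htrans x y
    obtain ⟨r', hr'⟩ := htrans y x
    have hsum : r + r' = 0 := by
      have hQ : ∀ b : ZMod p, d x b → d x (b + -(r + r')) := by
        intro b hb
        have h1 : d y (b - r) := hr (b - r) (by rwa [sub_add_cancel])
        have h2 : d x (b - r - r') := hr' (b - r - r') (by rwa [sub_add_cancel])
        have h3 : b - r - r' = b + -(r + r') := by ring
        rwa [h3] at h2
      have := key_shift _ hQ
      linear_combination -this
    have hr'' : r' = -r := by
      have h1 : r + r' = 0 := hsum
      linear_combination h1
    refine ⟨r, fun a => ⟨?_, ?_⟩⟩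
    · intro hda
      have := hr' (a + r) (by rw [hr'', add_assoc, add_neg_cancel, add_zero]; exact hda)
      exact this
    · intro hdx
      exact hr a hdx
  have huniq : ∀ (y : X) (r₁ r₂ : ZMod p),
      (∀ a : ZMod p, d y a ↔ d x (a + r₁)) → (∀ a : ZMod p, d y a ↔ d x (a + r₂)) → r₁ = r₂ := by
    intro y r₁ r₂ h1 h2
    have hQ : ∀ b : ZMod p, d x b → d x (b + (r₂ - r₁)) := by
      intro b hb
      have h3 : d y (b - r₁) := (h1 (b - r₁)).mpr (by rwa [sub_add_cancel])
      have h4 : d x (b - r₁ + r₂) := (h2 (b - r₁)).mp h3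
      rwa [show b - r₁ + r₂ = b + (r₂ - r₁) from by ring] at h4
    have := key_shift _ hQ
    linear_combination -this
  choose F hF using hspec
  have hFuniq : ∀ (y : X) (r : ZMod p), (∀ a : ZMod p, d y a ↔ d x (a + r)) → F y = r :=
    fun y r h => huniq y (F y) r (hF y) h
  have hFuniq' : ∀ (y : X) (r : ZMod p), (∀ a : ZMod p, d x (a + r) → d y a) → F y = r := by
    intro y r hin
    have hQ : ∀ b : ZMod p, d x b → d x (b + (F y - r)) := by
      intro b hb
      have h1 : d y (b - r) := hin (b - r) (by rwa [sub_add_cancel])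
      have h2 : d x (b - r + F y) := (hF y (b - r)).mp h1
      rwa [show b - r + F y = b + (F y - r) from by ring] at h2
    have := key_shift _ hQ
    linear_combination this
  refine ⟨F, ?_, ?_, ?_⟩
  · -- open preimages
    have hfibcl : ∀ r : ZMod p, IsClosed (F ⁻¹' {r}) := by
      intro r
      have heq : F ⁻¹' {r} = ⋂ a : ZMod p, ⋂ (_ : d x (a + r)), {y : X | S y ((a.val : ℕ) : ℤ)} := by
        ext y
        simp only [Set.mem_preimage, Set.mem_singleton_iff, Set.mem_iInter, Set.mem_setOf_eq]
        constructor
        · intro h a ha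
          exact (hF y a).mpr (by rw [h]; exact ha)
        · intro h
          exact hFuniq' y r h
      rw [heq]
      exact isClosed_iInter fun a => isClosed_iInter fun _ => hSclosed _
    have hfibop : ∀ r : ZMod p, IsOpen (F ⁻¹' {r}) := by
      intro r
      rw [← isClosed_compl_iff]
      have heq : (F ⁻¹' {r})ᶜ = ⋃ b ∈ ({r}ᶜ : Set (ZMod p)), F ⁻¹' {b} := by
        ext y
        simp only [Set.mem_compl_iff, Set.mem_preimage, Set.mem_singleton_iff, Set.mem_iUnion]
        exact ⟨fun h => ⟨F y, h, rfl⟩, fun ⟨b, hb, hyb⟩ => hyb ▸ hb⟩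
      rw [heq]
      exact Set.Finite.isClosed_biUnion (Set.toFinite _) fun b _ => hfibcl b
    intro s
    have heq : F ⁻¹' s = ⋃ a ∈ s, F ⁻¹' {a} := by
      ext y
      simp only [Set.mem_preimage, Set.mem_iUnion, Set.mem_singleton_iff]
      exact ⟨fun h => ⟨F y, h, rfl⟩, fun ⟨a, ha, hya⟩ => hya ▸ ha⟩
    rw [heq]
    exact isOpen_biUnion fun a _ => hfibop a
  · -- surjective
    intro a
    refine ⟨(T.toEquiv ^ ((a.val : ℕ) : ℤ)) x, ?_⟩
    apply hFuniq
    intro b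
    rw [hddef]
    simp only []
    rw [hStrans]
    rw [hSd x (((b.val : ℕ) : ℤ) + ((a.val : ℕ) : ℤ))]
    have hc : ((((b.val : ℕ) : ℤ) + ((a.val : ℕ) : ℤ) : ℤ) : ZMod p) = b + a := by
      push_cast
      rw [hval, hval]
    rw [hc]
  · -- equivariance
    intro y
    have h1 : F (T y) = F y + 1 := by
      apply hFuniq
      intro a
      have hTy : ∀ k : ℤ, S (T y) k ↔ S y (k + 1) := by
        intro k
        have := hStrans 1 y k
        rw [zpow_one] at this
        exact this
      rw [hddef]
      simp only []
      rw [hTy]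
      rw [hSd y (((a.val : ℕ) : ℤ) + 1)]
      have hc : ((((a.val : ℕ) : ℤ) + 1 : ℤ) : ZMod p) = a + 1 := by
        push_cast
        rw [hval]
      rw [hc]
      constructor
      · intro h
        have := (hF y (a + 1)).mp h
        rwa [show a + 1 + F y = a + (F y + 1) from by ring] at this
      · intro h
        apply (hF y (a + 1)).mpr
        rwa [show a + 1 + F y = a + (F y + 1) from by ring]
    exact h1

end EigenTFAE

/-- Let `(X,T)` be a minimal topological dynamical system and `p ≥ 2`. TFAE:
(1) `exp(2iπ/p)` is an eigenvalue of `(X,T)`;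
(2) `p` is an essential period of some point for some clopen set (`p ∈ ℙ(X,T)`);
(3) there is a closed `V ⊆ X` with `V, T⁻¹V, …, T^{-p+1}V` pairwise disjoint covering `X`;
(4) there is a factor map from `(X,T)` onto `(ℤ/pℤ, +1)`. -/
theorem eigenvalue_tfae
    {X : Type*} [MetricSpace X] [CompactSpace X] [Nonempty X]
    (T : X ≃ₜ X)
    (hmin : ∀ x : X, Dense (Set.range fun n : ℤ => (T.toEquiv ^ n) x))
    (p : ℕ) (hp : 2 ≤ p) :
    List.TFAE
      [ ∃ f : C(X, ℂ), f ≠ 0 ∧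
          ∀ x : X, f (T x) = Complex.exp (2 * Real.pi * Complex.I / p) * f x,
        ∃ (x : X) (U : Set X), IsClopen U ∧ IsEssentialPeriod T.toEquiv p x U,
        ∃ V : Set X, IsClosed V ∧
          (∀ i j : Fin p, i ≠ j →
            Disjoint ((fun x => (T.toEquiv ^ (i : ℤ)) x) ⁻¹' V)
              ((fun x => (T.toEquiv ^ (j : ℤ)) x) ⁻¹' V)) ∧
          (⋃ i : Fin p, (fun x => (T.toEquiv ^ (i : ℤ)) x) ⁻¹' V) = Set.univ,
        ∃ f : X → ZMod p, (∀ s : Set (ZMod p), IsOpen (f ⁻¹' s)) ∧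
          Function.Surjective f ∧ ∀ x : X, f (T x) = f x + 1 ] := by
  tfae_have 1 → 3 := EigenTFAE.imp13 T hmin p hp
  tfae_have 3 → 4 := EigenTFAE.imp34 T p hp
  tfae_have 4 → 1 := EigenTFAE.imp41 T p hp
  tfae_have 4 → 2 := EigenTFAE.imp42 T p hp
  tfae_have 2 → 4 := EigenTFAE.imp24 T hmin p hp
  tfae_finish
end

section
/- Let (X,T) be a minimal topological dynamical system and p ≥ 1 an integer. Suppose V and W are closed subsets of X such that both the collection {V, T^{-1}V, …, T^{-p+1}V} and the collection {W, T^{-1}W, …, T^{-p+1}W} consist of pairwise disjoint sets whose union is X. Then there exists i with 0 ≤ i < p such that W = T^{-i}V; that is, the partition in property (3) of the eigenvalue characterization is unique up to cyclic permutation. -/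
/-- Let `(X,T)` be a minimal topological dynamical system, `p ≥ 1`. If `V` and `W` are
closed sets such that both `{V, T⁻¹V, …, T^{-p+1}V}` and `{W, T⁻¹W, …, T^{-p+1}W}` are
partitions of `X` (pairwise disjoint with union `X`), then `W = T^{-i}V` for some
`0 ≤ i < p`: the partition is unique up to cyclic permutation. -/
theorem partition_unique_up_to_cyclic_permutation
    {X : Type*} [MetricSpace X] [CompactSpace X] [Nonempty X]
    (T : X ≃ₜ X)
    (hmin : ∀ x : X, Dense (Set.range fun n : ℤ => (T.toEquiv ^ n) x))
    (p : ℕ) (hp : 1 ≤ p)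
    (V W : Set X) (hV : IsClosed V) (hW : IsClosed W)
    (hVdisj : ∀ i j : Fin p, i ≠ j →
      Disjoint ((fun x => (T.toEquiv ^ (i : ℤ)) x) ⁻¹' V)
        ((fun x => (T.toEquiv ^ (j : ℤ)) x) ⁻¹' V))
    (hVcov : (⋃ i : Fin p, (fun x => (T.toEquiv ^ (i : ℤ)) x) ⁻¹' V) = Set.univ)
    (hWdisj : ∀ i j : Fin p, i ≠ j →
      Disjoint ((fun x => (T.toEquiv ^ (i : ℤ)) x) ⁻¹' W)
        ((fun x => (T.toEquiv ^ (j : ℤ)) x) ⁻¹' W))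
    (hWcov : (⋃ i : Fin p, (fun x => (T.toEquiv ^ (i : ℤ)) x) ⁻¹' W) = Set.univ) :
    ∃ i : ℕ, i < p ∧ W = (fun x => (T.toEquiv ^ (i : ℤ)) x) ⁻¹' V := by
  haveI : NeZero p := ⟨by omega⟩
  -- dispose of the trivial case p = 1
  by_cases hp1 : p = 1
  · subst hp1
    have huniv : ∀ (S : Set X),
        (⋃ i : Fin 1, (fun x => (T.toEquiv ^ (i : ℤ)) x) ⁻¹' S) = Set.univ → S = Set.univ := by
      intro S hS
      rw [Set.eq_univ_iff_forall]
      intro x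
      have hx : x ∈ ⋃ i : Fin 1, (fun x => (T.toEquiv ^ (i : ℤ)) x) ⁻¹' S := by
        rw [hS]; trivial
      obtain ⟨i, hi⟩ := Set.mem_iUnion.1 hx
      have : i = 0 := Subsingleton.elim _ _
      subst this
      simpa using hi
    refine ⟨0, by norm_num, ?_⟩
    have h1 := huniv V hVcov
    have h2 := huniv W hWcov
    simp [h1, h2]
  have hp2 : 2 ≤ p := by omega
  -- continuity of the iterates
  have hcont : ∀ n : ℤ, Continuous fun x => (T.toEquiv ^ n) x := by
    intro n
    induction n using Int.induction_on with
    | zero => simpa using continuous_id'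
    | succ k ih =>
        have h : (fun x => (T.toEquiv ^ ((k:ℤ) + 1)) x)
            = fun x => (T.toEquiv ^ (k:ℤ)) (T x) := by
          funext x; rw [zpow_add_one]; rfl
        rw [h]; exact ih.comp T.continuous
    | pred k ih =>
        have h : (fun x => (T.toEquiv ^ (-(k:ℤ) - 1)) x)
            = fun x => (T.toEquiv ^ (-(k:ℤ))) (T.symm x) := by
          funext x; rw [zpow_sub_one]; rfl
        rw [h]; exact ih.comp T.continuous_symm
  set sV : Fin p → Set X := fun k => (fun x => (T.toEquiv ^ (k : ℤ)) x) ⁻¹' V with hsV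
  set sW : Fin p → Set X := fun k => (fun x => (T.toEquiv ^ (k : ℤ)) x) ⁻¹' W with hsW
  -- unique index
  have uniq : ∀ (s : Fin p → Set X), (∀ i j : Fin p, i ≠ j → Disjoint (s i) (s j)) →
      (⋃ i, s i) = Set.univ → ∀ x : X, ∃! k : Fin p, x ∈ s k := by
    intro s hd hc x
    have hx : x ∈ ⋃ i, s i := by rw [hc]; trivial
    obtain ⟨k, hk⟩ := Set.mem_iUnion.1 hx
    refine ⟨k, hk, fun j hj => ?_⟩
    by_contra hne
    exact Set.notMem_empty x ((hd j k hne).inter_eq ▸ ⟨hj, hk⟩)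
  choose idxV hmemV huniqV using uniq sV hVdisj hVcov
  choose idxW hmemW huniqW using uniq sW hWdisj hWcov
  -- single-step shift
  have stepA : ∀ (S : Set X) (m : ℕ) (h : m + 1 < p) (x : X),
      x ∈ (fun y => (T.toEquiv ^ (((⟨m + 1, h⟩ : Fin p)) : ℤ)) y) ⁻¹' S ↔
      T x ∈ (fun y => (T.toEquiv ^ (((⟨m, Nat.lt_of_succ_lt h⟩ : Fin p)) : ℤ)) y) ⁻¹' S := by
    intro S m h x
    have hc1 : (((⟨m + 1, h⟩ : Fin p)) : ℤ) = (m : ℤ) + 1 := by simp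
    have hc2 : (((⟨m, Nat.lt_of_succ_lt h⟩ : Fin p)) : ℤ) = (m : ℤ) := by simp
    simp only [Set.mem_preimage, hc1, hc2]
    rw [zpow_add_one]
    rfl
  -- the index shifts cyclically under T
  have shiftGen : ∀ (S : Set X) (s : Fin p → Set X),
      s = (fun k : Fin p => (fun y => (T.toEquiv ^ (k : ℤ)) y) ⁻¹' S) →
      ∀ (idx : X → Fin p), (∀ x, x ∈ s (idx x)) → (∀ x k, x ∈ s k → k = idx x) →
      ∀ x, idx (T x) + 1 = idx x := by
    intro S s hs idx hmem huniq x
    set j := idx (T x) with hj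
    rcases lt_or_ge ((j : ℕ) + 1) p with h | h
    · -- x ∈ s ⟨j+1⟩, so idx x = j + 1
      have hTx : T x ∈ s ⟨(j : ℕ), j.isLt⟩ := by
        have := hmem (T x)
        rwa [show (⟨(j : ℕ), j.isLt⟩ : Fin p) = j from Fin.ext rfl]
      have hx : x ∈ s ⟨(j : ℕ) + 1, h⟩ := by
        rw [hs] at hTx ⊢
        exact (stepA S (j : ℕ) h x).2 hTx
      have hk := huniq x _ hx
      rw [← hk]
      apply Fin.ext
      simp only [Fin.add_def, Fin.val_one', Fin.val_mk]
      rw [Nat.mod_eq_of_lt hp2, Nat.mod_eq_of_lt (by omega)]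
    · -- j = p - 1, and idx x = 0
      have hjp : (j : ℕ) + 1 = p := by have := j.isLt; omega
      have hk0 : (idx x : ℕ) = 0 := by
        by_contra hne
        set k := idx x with hkdef
        have hk1 : 1 ≤ (k : ℕ) := Nat.one_le_iff_ne_zero.2 hne
        have hklt := k.isLt
        have hm : (k : ℕ) - 1 + 1 < p := by omega
        have hx : x ∈ s ⟨(k : ℕ) - 1 + 1, hm⟩ := by
          have := hmem x
          rwa [show (⟨(k : ℕ) - 1 + 1, hm⟩ : Fin p) = k from Fin.ext (by simp; omega)]
        have hTx : T x ∈ s ⟨(k : ℕ) - 1, Nat.lt_of_succ_lt hm⟩ := by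
          rw [hs] at hx ⊢
          exact (stepA S ((k : ℕ) - 1) hm x).1 hx
        have := huniq (T x) _ hTx
        have : ((⟨(k : ℕ) - 1, Nat.lt_of_succ_lt hm⟩ : Fin p) : ℕ) = (j : ℕ) := by rw [this]
        simp at this
        omega
      apply Fin.ext
      simp only [Fin.add_def, Fin.val_one', Fin.val_mk]
      rw [Nat.mod_eq_of_lt hp2, hjp, Nat.mod_self, hk0]
  have shiftV : ∀ x, idxV (T x) + 1 = idxV x := shiftGen V sV hsV idxV hmemV huniqV
  have shiftW : ∀ x, idxW (T x) + 1 = idxW x := shiftGen W sW hsW idxW hmemW huniqW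
  -- the invariant set E
  obtain ⟨x₀⟩ := (inferInstance : Nonempty X)
  set c : Fin p := idxW x₀ - idxV x₀ with hc
  set E : Set X := {x | idxW x = idxV x + c} with hE
  have hx₀E : x₀ ∈ E := by
    show idxW x₀ = idxV x₀ + c
    rw [hc, add_comm, sub_add_cancel]
  have hTE : ∀ x, x ∈ E ↔ T x ∈ E := by
    intro x
    simp only [hE, Set.mem_setOf_eq]
    constructor
    · intro hx
      have h1 := shiftW x
      have h2 := shiftV x
      have : idxW (T x) + 1 = idxV (T x) + c + 1 := by
        rw [h1, hx, ← h2]; abel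
      exact add_right_cancel this
    · intro hx
      rw [← shiftW x, hx, ← shiftV x]; abel
  have hEclosed : IsClosed E := by
    have hEeq : E = ⋃ k : Fin p, (sV k ∩ sW (k + c)) := by
      ext x
      simp only [hE, Set.mem_setOf_eq, Set.mem_iUnion, Set.mem_inter_iff]
      constructor
      · intro hx
        exact ⟨idxV x, hmemV x, by rw [← hx]; exact hmemW x⟩
      · rintro ⟨k, hk1, hk2⟩
        rw [← huniqW x _ hk2, huniqV x _ hk1]
    rw [hEeq]
    exact isClosed_iUnion_of_finite fun k =>
      ((hV.preimage (hcont _)).inter (hW.preimage (hcont _)))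
  have horb : ∀ n : ℤ, (T.toEquiv ^ n) x₀ ∈ E := by
    intro n
    induction n using Int.induction_on with
    | zero => simpa using hx₀E
    | succ k ih =>
        have h : (T.toEquiv ^ ((k : ℤ) + 1)) x₀ = T ((T.toEquiv ^ (k : ℤ)) x₀) := by
          rw [show (k : ℤ) + 1 = 1 + k by ring, zpow_add, zpow_one]; rfl
        rw [h]
        exact (hTE _).1 ih
    | pred k ih =>
        have h : (T.toEquiv ^ (-(k : ℤ) - 1)) x₀ = T.symm ((T.toEquiv ^ (-(k : ℤ))) x₀) := by
          rw [show -(k : ℤ) - 1 = -1 + -k by ring, zpow_add, zpow_neg_one]; rfl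
        rw [h]
        refine (hTE _).2 ?_
        rw [Homeomorph.apply_symm_apply]
        exact ih
  have hEuniv : E = Set.univ := by
    have hdense : Dense E := Dense.mono (Set.range_subset_iff.2 horb) (hmin x₀)
    rw [← hEclosed.closure_eq, hdense.closure_eq]
  have hEall : ∀ x : X, idxW x = idxV x + c := by
    intro x
    have : x ∈ E := by rw [hEuniv]; trivial
    exact this
  -- conclusion
  refine ⟨((-c : Fin p) : ℕ), Fin.is_lt _, ?_⟩
  have hgoal : (fun x => (T.toEquiv ^ ((((-c : Fin p) : ℕ) : ℤ))) x) ⁻¹' V = sV (-c) := rfl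
  rw [hgoal]
  ext x
  constructor
  · intro hx
    have hx0 : x ∈ sW 0 := by
      show (T.toEquiv ^ (((0 : Fin p)) : ℤ)) x ∈ W
      simpa using hx
    have h0 : (0 : Fin p) = idxW x := huniqW x 0 hx0
    have : idxV x = -c := by
      have := hEall x
      rw [← h0] at this
      exact eq_neg_of_add_eq_zero_left (by rw [← this])
    rw [← this]
    exact hmemV x
  · intro hx
    have h1 : (-c : Fin p) = idxV x := huniqV x _ hx
    have h2 : idxW x = 0 := by
      rw [hEall x, ← h1]; abel
    have := hmemW x
    rw [h2] at this
    have : (T.toEquiv ^ (((0 : Fin p)) : ℤ)) x ∈ W := this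
    simpa using this
end

section
/- Let (X,T) be a minimal topological dynamical system and let (X',T') be a factor of (X,T). Then ℙ(X',T') ⊆ ℙ(X,T). -/
/-- The periodic spectrum `ℙ(X,T)`: integers `p ≥ 2` that are an essential period of
some point of `X` for some clopen set `U`. -/
def periodicSpectrum {X : Type*} [TopologicalSpace X] (T : X ≃ₜ X) : Set ℕ :=
  {p : ℕ | 2 ≤ p ∧ ∃ (x : X) (U : Set X), IsClopen U ∧ IsEssentialPeriod T.toEquiv p x U}

/-- If `(X',T')` is a factor of the minimal system `(X,T)`, then `ℙ(X',T') ⊆ ℙ(X,T)`. -/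
theorem periodicSpectrum_factor_subset
    {X X' : Type*} [MetricSpace X] [CompactSpace X] [Nonempty X]
    [MetricSpace X'] [CompactSpace X'] [Nonempty X']
    (T : X ≃ₜ X) (T' : X' ≃ₜ X')
    (hmin : ∀ x : X, Dense (Set.range fun n : ℤ => (T.toEquiv ^ n) x))
    (π : X → X') (hπcont : Continuous π) (hπsurj : Function.Surjective π)
    (hπ : ∀ x : X, π (T x) = T' (π x)) :
    periodicSpectrum T' ⊆ periodicSpectrum T := by
  rintro p ⟨hp2, x', U', hU', hess⟩
  obtain ⟨x, hx⟩ := hπsurj x'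
  -- semiconjugacy for integer powers
  have hinv : ∀ y : X, π (T.toEquiv⁻¹ y) = T'.toEquiv⁻¹ (π y) := by
    intro y
    have := hπ (T.toEquiv⁻¹ y)
    have h2 : π y = T' (π (T.symm y)) := by
      have := hπ (T.symm y)
      simpa using this
    rw [h2]
    exact (Equiv.symm_apply_apply T'.toEquiv _).symm
  have hz : ∀ (n : ℤ) (y : X), π ((T.toEquiv ^ n) y) = (T'.toEquiv ^ n) (π y) := by
    intro n
    induction n using Int.induction_on with
    | zero => simp
    | succ k ih =>
      intro y
      have : ((k : ℤ) + 1) = k + 1 := rfl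
      rw [zpow_add_one, zpow_add_one]
      simp only [Equiv.Perm.mul_apply]
      rw [ih]
      exact congrArg _ (hπ y)
    | pred k ih =>
      intro y
      rw [show (-(k : ℤ) - 1) = (-k) + (-1) by ring, zpow_add, zpow_add]
      simp only [Equiv.Perm.mul_apply, zpow_neg_one]
      rw [ih]
      exact congrArg _ (hinv y)
  -- skeleton equality
  have hskel : periodSkeleton T.toEquiv p x (π ⁻¹' U') = periodSkeleton T'.toEquiv p x' U' := by
    ext k
    simp only [periodSkeleton, Set.mem_setOf_eq, Set.mem_preimage]
    constructor <;> intro h n <;> have := h n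
    · rwa [hz, hx] at this
    · rwa [hz, hx]
  exact ⟨hp2, x, π ⁻¹' U', hU'.preimage hπcont,
    by rw [IsEssentialPeriod, hskel]; exact hess⟩
end

section
/- Let x ∈ A^ℤ be a sturmian sequence. Then x admits no constant arithmetic subsequence: there are no integer p ≥ 1, integer k ∈ ℤ and letter a ∈ A such that x_{k+np} = a for all n ∈ ℤ. -/
open Finset

/-- `x` is uniformly recurrent: every finite factor of `x` occurs in `x` with bounded
gaps. -/
def UniformlyRecurrent {A : Type*} (x : ℤ → A) : Prop :=
  ∀ (m : ℕ) (i : ℤ), ∃ B : ℕ, ∀ k : ℤ, ∃ j : ℤ, k ≤ j ∧ j ≤ k + B ∧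
    ∀ t : Fin m, x (j + t) = x (i + t)

/-- The complexity function of `x`: the number of distinct factors of length `n`. -/
noncomputable def complexity {A : Type*} (x : ℤ → A) (n : ℕ) : ℕ :=
  Nat.card {w : Fin n → A | ∃ i : ℤ, ∀ j : Fin n, w j = x (i + j)}

/-- `x` is sturmian: uniformly recurrent with complexity `n + 1`. -/
def IsSturmian {A : Type*} (x : ℤ → A) : Prop :=
  UniformlyRecurrent x ∧ ∀ n : ℕ, complexity x n = n + 1

namespace StAux

attribute [local instance] Classical.propDecidable

set_option linter.unusedSectionVars false

variable {A : Type*} [Fintype A]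

/-- The window of length `n` starting at `r`. -/
def win (x : ℤ → A) (n : ℕ) (r : ℤ) : Fin n → A := fun t => x (r + (t : ℕ))

open Classical in
/-- The set of factors of length `n`, as a Finset. -/
noncomputable def Fac (x : ℤ → A) (n : ℕ) : Finset (Fin n → A) :=
  Finset.univ.filter (fun y => ∃ r : ℤ, ∀ t : Fin n, y t = x (r + t))

lemma mem_Fac_iff {x : ℤ → A} {n : ℕ} {y : Fin n → A} :
    y ∈ Fac x n ↔ ∃ r : ℤ, win x n r = y := by
  classical
  simp only [Fac, Finset.mem_filter, Finset.mem_univ, true_and]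
  constructor
  · rintro ⟨r, hr⟩
    exact ⟨r, funext fun t => (hr t).symm⟩
  · rintro ⟨r, hr⟩
    exact ⟨r, fun t => congrFun hr.symm t⟩

lemma win_mem_Fac (x : ℤ → A) (n : ℕ) (r : ℤ) : win x n r ∈ Fac x n :=
  mem_Fac_iff.2 ⟨r, rfl⟩

lemma card_Fac (x : ℤ → A) (h : ∀ n : ℕ, complexity x n = n + 1) (n : ℕ) :
    (Fac x n).card = n + 1 := by
  classical
  have := h n
  rw [complexity] at this
  rw [← this, Nat.card_eq_fintype_card]
  rw [Fintype.card_subtype]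
  congr 1

lemma win_eq_iff {x : ℤ → A} {n : ℕ} {r r' : ℤ} :
    win x n r = win x n r' ↔ ∀ t : ℕ, t < n → x (r + t) = x (r' + t) := by
  constructor
  · intro h t ht
    exact congrFun h ⟨t, ht⟩
  · intro h
    funext t
    exact h t t.2

lemma win_succ_snoc (x : ℤ → A) (n : ℕ) (r : ℤ) :
    win x (n + 1) r = Fin.snoc (win x n r) (x (r + n)) := by
  funext t
  refine Fin.lastCases ?_ (fun s => ?_) t
  · rw [Fin.snoc_last]; rfl
  · rw [Fin.snoc_castSucc]; rfl

lemma init_win (x : ℤ → A) (n : ℕ) (r : ℤ) :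
    Fin.init (win x (n + 1) r) = win x n r := by
  rw [win_succ_snoc, Fin.init_snoc]

/-- occurrence to the right of any position -/
lemma exists_occ_ge {x : ℤ → A} (hUR : UniformlyRecurrent x) (n : ℕ) (i K : ℤ) :
    ∃ r : ℤ, K ≤ r ∧ win x n r = win x n i := by
  obtain ⟨B, hB⟩ := hUR n i
  obtain ⟨j, hj1, _, hj3⟩ := hB K
  exact ⟨j, hj1, funext fun t => hj3 t⟩

/-- occurrence to the left of any position -/
lemma exists_occ_le {x : ℤ → A} (hUR : UniformlyRecurrent x) (n : ℕ) (i K : ℤ) :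
    ∃ r : ℤ, r ≤ K ∧ win x n r = win x n i := by
  obtain ⟨B, hB⟩ := hUR n i
  obtain ⟨j, hj1, hj2, hj3⟩ := hB (K - B)
  exact ⟨j, by omega, funext fun t => hj3 t⟩

open Classical in
/-- right extensions of a word -/
noncomputable def rext (x : ℤ → A) (n : ℕ) (y : Fin n → A) : Finset A :=
  Finset.univ.filter (fun c => Fin.snoc y c ∈ Fac x (n + 1))

lemma mem_rext {x : ℤ → A} {n : ℕ} {y : Fin n → A} {c : A} :
    c ∈ rext x n y ↔ Fin.snoc y c ∈ Fac x (n + 1) := by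
  classical
  simp [rext]

lemma rext_nonempty {x : ℤ → A} {n : ℕ} {y : Fin n → A} (hy : y ∈ Fac x n) :
    1 ≤ (rext x n y).card := by
  obtain ⟨r, hr⟩ := mem_Fac_iff.1 hy
  have : x (r + n) ∈ rext x n y := by
    rw [mem_rext, ← hr, ← win_succ_snoc]
    exact win_mem_Fac x (n+1) r
  exact Finset.card_pos.2 ⟨_, this⟩

lemma sum_rext (x : ℤ → A) (n : ℕ) :
    ∑ y ∈ Fac x n, (rext x n y).card = (Fac x (n + 1)).card := by
  classical
  have hmaps : ∀ z ∈ Fac x (n+1), Fin.init z ∈ Fac x n := by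
    intro z hz
    obtain ⟨r, hr⟩ := mem_Fac_iff.1 hz
    rw [← hr, init_win]
    exact win_mem_Fac x n r
  rw [Finset.card_eq_sum_card_fiberwise hmaps]
  refine Finset.sum_congr rfl (fun y hy => ?_)
  refine (Finset.card_bij (fun z _ => z (Fin.last n)) ?_ ?_ ?_).symm
  · intro z hz
    simp only [Finset.mem_filter] at hz
    have : Fin.snoc y (z (Fin.last n)) = z := by rw [← hz.2]; exact Fin.snoc_init_self z
    rw [mem_rext, this]
    exact hz.1
  · intro z1 h1 z2 h2 hlast
    simp only [Finset.mem_filter] at h1 h2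
    rw [← Fin.snoc_init_self z1, ← Fin.snoc_init_self z2, h1.2, h2.2, hlast]
  · intro c hc
    rw [mem_rext] at hc
    refine ⟨Fin.snoc y c, ?_, ?_⟩
    · simp only [Finset.mem_filter]
      exact ⟨hc, Fin.init_snoc _ _⟩
    · simp

section Chunk2
set_option linter.unusedSectionVars false
variable {A : Type*} [Fintype A]

open Finset

open Classical in
/-- number of occurrences of the letter `a` in the window `[i, i+m)` -/
noncomputable def cnt (x : ℤ → A) (a : A) (i : ℤ) (m : ℕ) : ℕ :=
  ∑ t ∈ Finset.range m, if x (i + (t : ℕ)) = a then 1 else 0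

lemma cnt_succ (x : ℤ → A) (a : A) (i : ℤ) (m : ℕ) :
    cnt x a i (m + 1) = cnt x a i m + if x (i + (m : ℕ)) = a then 1 else 0 := by
  classical
  rw [cnt, Finset.sum_range_succ]
  rfl

lemma cnt_zero (x : ℤ → A) (a : A) (i : ℤ) : cnt x a i 0 = 0 := by
  simp [cnt]

lemma cnt_one (x : ℤ → A) (a : A) (i : ℤ) :
    cnt x a i 1 = if x i = a then 1 else 0 := by
  classical
  rw [cnt, Finset.sum_range_one]
  norm_num

lemma cnt_cons (x : ℤ → A) (a : A) (i : ℤ) (m : ℕ) :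
    cnt x a i (m + 1) = (if x i = a then 1 else 0) + cnt x a (i + 1) m := by
  classical
  induction m with
  | zero => rw [cnt_one, cnt_zero]; rfl
  | succ m ih =>
    rw [cnt_succ, ih, cnt_succ]
    have h : i + ((m + 1 : ℕ) : ℤ) = i + 1 + (m : ℕ) := by push_cast; ring
    rw [h, add_assoc]

lemma cnt_add (x : ℤ → A) (a : A) (i : ℤ) (m l : ℕ) :
    cnt x a i (m + l) = cnt x a i m + cnt x a (i + (m : ℕ)) l := by
  classical
  induction l with
  | zero => simp [cnt_zero]
  | succ l ih =>
    rw [← add_assoc, cnt_succ, ih, cnt_succ]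
    have h : i + ((m + l : ℕ) : ℤ) = i + (m : ℕ) + (l : ℕ) := by push_cast; ring
    rw [h, add_assoc]

lemma cnt_le (x : ℤ → A) (a : A) (i : ℤ) (m : ℕ) : cnt x a i m ≤ m := by
  classical
  calc cnt x a i m ≤ ∑ _t ∈ Finset.range m, 1 := by
        refine Finset.sum_le_sum (fun t _ => ?_); split <;> omega
    _ = m := by simp

lemma cnt_congr (x : ℤ → A) (a : A) {i j : ℤ} {m : ℕ}
    (h : ∀ t : ℕ, t < m → x (i + t) = x (j + t)) : cnt x a i m = cnt x a j m := by
  classical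
  refine Finset.sum_congr rfl (fun t ht => ?_)
  rw [h t (Finset.mem_range.1 ht)]

variable {x : ℤ → A} {a b : A}

lemma uniq_rext (hcard : ∀ n : ℕ, (Fac x n).card = n + 1) (hab : a ≠ b)
    {n : ℕ} {w y : Fin n → A} (hw : w ∈ Fac x n)
    (hwa : a ∈ rext x n w) (hwb : b ∈ rext x n w)
    (hy : y ∈ Fac x n) (hyw : y ≠ w) : (rext x n y).card = 1 := by
  classical
  have h1 : 1 ≤ (rext x n y).card := rext_nonempty hy
  by_contra hne
  have hy2 : 2 ≤ (rext x n y).card := by omega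
  have hw2 : 2 ≤ (rext x n w).card := by
    have hsub : ({a, b} : Finset A) ⊆ rext x n w := by
      intro c hc
      rcases Finset.mem_insert.1 hc with h | h
      · rwa [h]
      · rw [Finset.mem_singleton.1 h]; exact hwb
    have : ({a, b} : Finset A).card = 2 := by
      rw [Finset.card_insert_of_notMem (by simpa using hab), Finset.card_singleton]
    calc 2 = ({a, b} : Finset A).card := this.symm
      _ ≤ _ := Finset.card_le_card hsub
  have hyew : y ∈ (Fac x n).erase w := Finset.mem_erase.2 ⟨hyw, hy⟩
  have hsum := sum_rext x n
  rw [hcard (n + 1)] at hsum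
  have e1 : ∑ z ∈ (Fac x n).erase w, (rext x n z).card + (rext x n w).card
      = ∑ z ∈ Fac x n, (rext x n z).card := Finset.sum_erase_add _ _ hw
  have e2 : ∑ z ∈ ((Fac x n).erase w).erase y, (rext x n z).card + (rext x n y).card
      = ∑ z ∈ (Fac x n).erase w, (rext x n z).card := Finset.sum_erase_add _ _ hyew
  have e3 : (((Fac x n).erase w).erase y).card • 1 ≤ ∑ z ∈ ((Fac x n).erase w).erase y, (rext x n z).card :=
    Finset.card_nsmul_le_sum _ _ _ (fun z hz =>
      rext_nonempty (Finset.mem_of_mem_erase (Finset.mem_of_mem_erase hz)))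
  have c1 : ((Fac x n).erase w).card = n := by
    rw [Finset.card_erase_of_mem hw, hcard n]
    omega
  have hn1 : 1 ≤ n := by
    have : 0 < ((Fac x n).erase w).card := Finset.card_pos.2 ⟨y, hyew⟩
    omega
  have c2 : (((Fac x n).erase w).erase y).card = n - 1 := by
    rw [Finset.card_erase_of_mem hyew, c1]
  rw [c2, smul_eq_mul, mul_one] at e3
  omega

lemma det_letter (hcard : ∀ n : ℕ, (Fac x n).card = n + 1) (hab : a ≠ b)
    {n : ℕ} {w y : Fin n → A} (hw : w ∈ Fac x n)
    (hwa : a ∈ rext x n w) (hwb : b ∈ rext x n w)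
    (hy : y ∈ Fac x n) (hyw : y ≠ w) {r r' : ℤ}
    (hr : win x n r = y) (hr' : win x n r' = y) : x (r + (n : ℕ)) = x (r' + (n : ℕ)) := by
  classical
  have hcard1 := uniq_rext hcard hab hw hwa hwb hy hyw
  obtain ⟨c, hc⟩ := Finset.card_eq_one.1 hcard1
  have m1 : x (r + (n : ℕ)) ∈ rext x n y := by
    rw [mem_rext, ← hr, ← win_succ_snoc]
    exact win_mem_Fac x (n + 1) r
  have m2 : x (r' + (n : ℕ)) ∈ rext x n y := by
    rw [mem_rext, ← hr', ← win_succ_snoc]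
    exact win_mem_Fac x (n + 1) r'
  rw [hc, Finset.mem_singleton] at m1 m2
  rw [m1, m2]

lemma win_shift {n : ℕ} (hn : 1 ≤ n) {r r' : ℤ}
    (h : win x n r = win x n r') (hl : x (r + (n : ℕ)) = x (r' + (n : ℕ))) :
    win x n (r + 1) = win x n (r' + 1) := by
  rw [win_eq_iff] at h ⊢
  intro t ht
  rcases Nat.lt_or_ge (t + 1) n with h1 | h1
  · have h2 := h (t + 1) h1
    have e1 : r + 1 + (t : ℕ) = r + ((t + 1 : ℕ) : ℤ) := by push_cast; ring
    have e2 : r' + 1 + (t : ℕ) = r' + ((t + 1 : ℕ) : ℤ) := by push_cast; ring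
    rw [e1, e2]; exact h2
  · have ht1 : t + 1 = n := by omega
    have e1 : r + 1 + (t : ℕ) = r + ((n : ℕ) : ℤ) := by
      rw [← ht1]; push_cast; ring
    have e2 : r' + 1 + (t : ℕ) = r' + ((n : ℕ) : ℤ) := by
      rw [← ht1]; push_cast; ring
    rw [e1, e2]; exact hl

lemma win_restrict {n : ℕ} {r r' : ℤ}
    (h : win x (n + 1) r = win x (n + 1) r') : win x n r = win x n r' := by
  rw [win_eq_iff] at h ⊢
  exact fun t ht => h t (by omega)

lemma exists_fret (hUR : UniformlyRecurrent x) (n : ℕ) (r : ℤ) :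
    ∃ q : ℤ, 1 ≤ q ∧ win x n (r + q) = win x n r ∧
      ∀ d : ℤ, 1 ≤ d → d < q → win x n (r + d) ≠ win x n r := by
  classical
  obtain ⟨r2, hr2, hwin⟩ := exists_occ_ge hUR n r (r + 1)
  have hbdd : ∃ lb : ℤ, (1 ≤ lb ∧ win x n (r + lb) = win x n r) ∧
      ∀ z : ℤ, (1 ≤ z ∧ win x n (r + z) = win x n r) → lb ≤ z := by
    apply Int.exists_least_of_bdd
    · exact ⟨1, fun z hz => hz.1⟩
    · exact ⟨r2 - r, by omega, by rw [show r + (r2 - r) = r2 by ring]; exact hwin⟩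
  obtain ⟨q, ⟨hq1, hq2⟩, hqmin⟩ := hbdd
  exact ⟨q, hq1, hq2, fun d hd1 hd2 hd3 => by
    have := hqmin d ⟨hd1, hd3⟩; omega⟩

end Chunk2
end StAux

section Chunk3
set_option linter.unusedSectionVars false
variable {A : Type*} [Fintype A] {x : ℤ → A} {a b : A}

open Finset

namespace StAux

lemma fret_le (hcard : ∀ n : ℕ, (Fac x n).card = n + 1) (hab : a ≠ b)
    {n : ℕ} (hn : 1 ≤ n) {w : Fin n → A} (hw : w ∈ Fac x n)
    (hwa : a ∈ rext x n w) (hwb : b ∈ rext x n w)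
    {r q : ℤ} (hq1 : 1 ≤ q)
    (hocc : win x n (r + q) = w)
    (hmin : ∀ d : ℤ, 1 ≤ d → d < q → win x n (r + d) ≠ w) :
    q ≤ n + 1 := by
  classical
  by_contra hq
  push_neg at hq
  have hmaps : ∀ t : Fin (n + 1), win x n (r + 1 + ((t : ℕ) : ℤ)) ∈ (Fac x n).erase w := by
    intro t
    refine Finset.mem_erase.2 ⟨?_, win_mem_Fac x n _⟩
    have ht : ((t : ℕ) : ℤ) ≤ (n : ℤ) := by exact_mod_cast Nat.le_of_lt_succ t.2
    have := hmin (1 + ((t : ℕ) : ℤ)) (by omega) (by omega)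
    rwa [show r + (1 + ((t : ℕ) : ℤ)) = r + 1 + ((t : ℕ) : ℤ) by ring] at this
  have hlt : ((Fac x n).erase w).card < (Finset.univ : Finset (Fin (n + 1))).card := by
    rw [Finset.card_erase_of_mem hw, hcard n, Finset.card_univ, Fintype.card_fin]
    omega
  obtain ⟨t1, -, t2, -, hne, heq⟩ :=
    Finset.exists_ne_map_eq_of_card_lt_of_maps_to hlt (fun t _ => hmaps t)
  obtain ⟨u1, u2, hu12, hb2, hequ⟩ : ∃ u1 u2 : ℕ, u1 < u2 ∧ u2 < n + 1 ∧
      win x n (r + 1 + (u1 : ℤ)) = win x n (r + 1 + (u2 : ℤ)) := by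
    rcases lt_or_gt_of_ne hne with h | h
    · exact ⟨t1, t2, h, t2.2, heq⟩
    · exact ⟨t2, t1, h, t1.2, heq.symm⟩
  have hu2n : (u2 : ℤ) ≤ (n : ℤ) := by exact_mod_cast Nat.le_of_lt_succ hb2
  have hu12' : (u1 : ℤ) < (u2 : ℤ) := by exact_mod_cast hu12
  have claim : ∀ u : ℕ, 1 + (u2 : ℤ) + (u : ℤ) ≤ q →
      win x n (r + 1 + (u1 : ℤ) + (u : ℤ)) = win x n (r + 1 + (u2 : ℤ) + (u : ℤ)) := by
    intro u
    induction u with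
    | zero => intro _; simpa using hequ
    | succ u ih =>
      intro hle
      have hcast : ((u + 1 : ℕ) : ℤ) = (u : ℤ) + 1 := by push_cast; ring
      rw [hcast] at hle
      have prev := ih (by omega)
      have hnw : win x n (r + 1 + (u1 : ℤ) + (u : ℤ)) ≠ w := by
        have := hmin (1 + (u1 : ℤ) + (u : ℤ)) (by omega) (by omega)
        rwa [show r + (1 + (u1 : ℤ) + (u : ℤ)) = r + 1 + (u1 : ℤ) + (u : ℤ) by ring] at this
      have hdet := det_letter hcard hab hw hwa hwb
        (win_mem_Fac x n (r + 1 + (u1 : ℤ) + (u : ℤ))) hnw rfl prev.symm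
      have hshift := win_shift hn prev hdet
      rw [hcast]
      rw [show r + 1 + (u1 : ℤ) + ((u : ℤ) + 1) = r + 1 + (u1 : ℤ) + (u : ℤ) + 1 by ring,
        show r + 1 + (u2 : ℤ) + ((u : ℤ) + 1) = r + 1 + (u2 : ℤ) + (u : ℤ) + 1 by ring]
      exact hshift
  set u' : ℕ := (q - 1 - (u2 : ℤ)).toNat with hu'
  have hu'z : ((u' : ℕ) : ℤ) = q - 1 - (u2 : ℤ) := Int.toNat_of_nonneg (by omega)
  have hclaim := claim u' (by omega)
  have hpos2 : r + 1 + (u2 : ℤ) + (u' : ℤ) = r + q := by omega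
  rw [hpos2, hocc] at hclaim
  have := hmin (1 + (u1 : ℤ) + (u' : ℤ)) (by omega) (by omega)
  rw [show r + (1 + (u1 : ℤ) + (u' : ℤ)) = r + 1 + (u1 : ℤ) + (u' : ℤ) by ring] at this
  exact this hclaim

lemma lam_letter {n : ℕ} (hn : 1 ≤ n) {i1 : ℤ} {c : A}
    (hpal : ∀ t : ℕ, t < n → x (i1 + (t : ℕ)) = x (i1 + ((n - 1 - t : ℕ) : ℤ)))
    {r q : ℤ} (hr : win x n r = win x n i1) (hq1 : 1 ≤ q) (hqn : q ≤ (n : ℤ) + 1)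
    (hocc : win x n (r + q) = win x n i1) (hbr : x (r + (n : ℕ)) = c) :
    x (r + q - 1) = c := by
  rcases eq_or_lt_of_le hqn with hq | hq
  · rw [show r + q - 1 = r + (n : ℕ) by omega]
    exact hbr
  · -- q ≤ n
    have hqn' : q ≤ (n : ℤ) := by omega
    set qn : ℕ := q.toNat with hqn0
    have hqz : ((qn : ℕ) : ℤ) = q := Int.toNat_of_nonneg (by omega)
    have h1 : qn - 1 < n := by omega
    have e1 : x (r + q - 1) = x (i1 + ((qn - 1 : ℕ) : ℤ)) := by
      have := win_eq_iff.1 hr (qn - 1) h1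
      rw [show r + ((qn - 1 : ℕ) : ℤ) = r + q - 1 by omega] at this
      exact this
    have h2 : n - qn < n := by omega
    have e2 : x (r + (n : ℕ)) = x (i1 + ((n - qn : ℕ) : ℤ)) := by
      have := win_eq_iff.1 hocc (n - qn) h2
      rw [show r + q + ((n - qn : ℕ) : ℤ) = r + (n : ℕ) by omega] at this
      exact this
    have e3 : x (i1 + ((qn - 1 : ℕ) : ℤ)) = x (i1 + ((n - qn : ℕ) : ℤ)) := by
      have := hpal (qn - 1) h1
      rw [show n - 1 - (qn - 1) = n - qn by omega] at this
      exact this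
    rw [e1, e3, ← e2, hbr]

lemma exists_trans (hcard : ∀ n : ℕ, (Fac x n).card = n + 1)
    (hUR : UniformlyRecurrent x) (hab : a ≠ b) (h2 : ∀ i : ℤ, x i = a ∨ x i = b)
    {n : ℕ} {w : Fin n → A} {c d : A}
    (hcd : (c = a ∧ d = b) ∨ (c = b ∧ d = a))
    {r0 : ℤ} (hr0 : win x n r0 = w) (hbr0 : x (r0 + (n : ℕ)) = c)
    {rd : ℤ} (hrd : win x n rd = w) (hbrd : x (rd + (n : ℕ)) = d) :
    ∃ r q : ℤ, win x n r = w ∧ x (r + (n : ℕ)) = c ∧ 1 ≤ q ∧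
      win x n (r + q) = w ∧ (∀ e : ℤ, 1 ≤ e → e < q → win x n (r + e) ≠ w) ∧
      x (r + q + (n : ℕ)) = d := by
  classical
  by_contra H
  push_neg at H
  have hcd' : c ≠ d := by rcases hcd with ⟨h1, h3⟩ | ⟨h1, h3⟩ <;> rw [h1, h3]
    <;> [exact hab; exact hab.symm]
  have hother : ∀ i : ℤ, x i ≠ d → x i = c := by
    intro i hi
    rcases h2 i with h | h <;> rcases hcd with ⟨h1, h3⟩ | ⟨h1, h3⟩ <;>
      first
        | (rw [h1]; exact h)
        | (exfalso; exact hi (by rw [h3]; exact h))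
  -- all occurrences to the right of r0 have branch letter c
  have claim : ∀ m : ℕ, ∀ s : ℤ, win x n s = w → r0 ≤ s → (s - r0).toNat = m →
      x (s + (n : ℕ)) = c := by
    intro m
    induction m using Nat.strong_induction_on with
    | _ m ih =>
      intro s hs hs0 hsm
      rcases eq_or_lt_of_le hs0 with he | hlt
      · rw [← he]; exact hbr0
      · -- greatest occurrence ≤ s - 1
        obtain ⟨s', ⟨hs'w, hs'0, hs'le⟩, hs'max⟩ :=
          Int.exists_greatest_of_bdd (P := fun z => win x n z = w ∧ r0 ≤ z ∧ z ≤ s - 1)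
            ⟨s - 1, fun z hz => hz.2.2⟩ ⟨r0, hr0, le_refl r0, by omega⟩
        have hbs' : x (s' + (n : ℕ)) = c := by
          refine ih (s' - r0).toNat ?_ s' hs'w hs'0 rfl
          omega
        have hmin : ∀ e : ℤ, 1 ≤ e → e < s - s' → win x n (s' + e) ≠ w := by
          intro e he1 he2 hew
          have := hs'max (s' + e) ⟨hew, by omega, by omega⟩
          omega
        have := H s' (s - s') hs'w hbs' (by omega)
          (by rw [show s' + (s - s') = s by ring]; exact hs) hmin
        rw [show s' + (s - s') = s by ring] at this
        exact hother _ this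
  -- an occurrence with branch letter d to the right of r0
  obtain ⟨r', hr'0, hr'⟩ := exists_occ_ge hUR (n + 1) rd r0
  have hr'w : win x n r' = w := by rw [win_restrict hr', hrd]
  have hr'd : x (r' + (n : ℕ)) = d := by
    have := win_eq_iff.1 hr' n (by omega)
    rw [this, hbrd]
  have := claim (r' - r0).toNat r' hr'w hr'0 rfl
  rw [hr'd] at this
  exact hcd' this.symm

end StAux
end Chunk3
section Chunk4
set_option linter.unusedSectionVars false
set_option maxHeartbeats 1000000
variable {A : Type*} [Fintype A] {x : ℤ → A} {a b : A}

open Finset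

namespace StAux

attribute [local instance] Classical.propDecidable

/-- two-letter sequences with `aa` and `bb` factors and `ab`,`ba` missing lead to
a contradiction with complexity `n+1` and uniform recurrence. -/
lemma no_unbalance_len2 (hcard : ∀ n : ℕ, (Fac x n).card = n + 1)
    (hUR : UniformlyRecurrent x) (hab : a ≠ b) (h2 : ∀ i : ℤ, x i = a ∨ x i = b)
    {i j : ℤ} (hia : x i = a) (hia2 : x (i + 1) = a)
    (hjb : x j = b) (hjb2 : x (j + 1) = b) : False := by
  -- first: a `ba` occurrence exists
  have hba : ∃ r : ℤ, x r = b ∧ x (r + 1) = a := by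
    by_contra hno
    push_neg at hno
    have hstep : ∀ r : ℤ, x r = b → x (r + 1) = b := by
      intro r hr
      rcases h2 (r + 1) with h | h
      · exact absurd h (hno r hr)
      · exact h
    have hall : ∀ t : ℕ, x (j + t) = b := by
      intro t
      induction t with
      | zero => simpa using hjb
      | succ t ih =>
        have := hstep (j + t) ih
        rwa [show j + (t : ℕ) + 1 = j + ((t + 1 : ℕ) : ℤ) by push_cast; ring] at this
    obtain ⟨r, hrge, hr⟩ := exists_occ_ge hUR 1 i j
    have h1 : x r = x i := by
      have := win_eq_iff.1 hr 0 (by omega)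
      simpa using this
    have h2' : x (j + ((r - j).toNat : ℕ)) = b := hall (r - j).toNat
    rw [show j + (((r - j).toNat : ℕ) : ℤ) = r by omega] at h2'
    rw [h1, hia] at h2'
    exact hab h2'
  have hA : ∃ r : ℤ, x r = a ∧ x (r + 1) = b := by
    by_contra hno
    push_neg at hno
    have hstep : ∀ r : ℤ, x r = a → x (r + 1) = a := by
      intro r hr
      rcases h2 (r + 1) with h | h
      · exact h
      · exact absurd h (hno r hr)
    have hall : ∀ t : ℕ, x (i + t) = a := by
      intro t
      induction t with
      | zero => simpa using hia
      | succ t ih =>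
        have := hstep (i + t) ih
        rwa [show i + (t : ℕ) + 1 = i + ((t + 1 : ℕ) : ℤ) by push_cast; ring] at this
    obtain ⟨r, hrge, hr⟩ := exists_occ_ge hUR 1 j i
    have h1 : x r = x j := by
      have := win_eq_iff.1 hr 0 (by omega)
      simpa using this
    have h2' : x (i + ((r - i).toNat : ℕ)) = a := hall (r - i).toNat
    rw [show i + (((r - i).toNat : ℕ) : ℤ) = r by omega] at h2'
    rw [h1, hjb] at h2'
    exact hab h2'.symm
  obtain ⟨rab, hab1, hab2⟩ := hA
  obtain ⟨rba, hba1, hba2⟩ := hba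
  -- four distinct factors of length 2
  have hmem : ∀ r : ℤ, win x 2 r ∈ Fac x 2 := fun r => win_mem_Fac x 2 r
  have hval : ∀ r : ℤ, win x 2 r 0 = x r ∧ win x 2 r 1 = x (r + 1) := by
    intro r
    constructor
    · show x (r + ((0 : ℕ) : ℤ)) = x r; norm_num
    · show x (r + ((1 : ℕ) : ℤ)) = x (r + 1); norm_num
  have hsub : ({win x 2 i, win x 2 j, win x 2 rab, win x 2 rba} : Finset (Fin 2 → A)) ⊆ Fac x 2 := by
    intro z hz
    simp only [Finset.mem_insert, Finset.mem_singleton] at hz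
    rcases hz with h | h | h | h <;> rw [h] <;> exact hmem _
  have hcard4 : ({win x 2 i, win x 2 j, win x 2 rab, win x 2 rba} : Finset (Fin 2 → A)).card = 4 := by
    have d1 : win x 2 i ≠ win x 2 j := by
      intro h; have := congrFun h 0; rw [(hval i).1, (hval j).1, hia, hjb] at this; exact hab this
    have d2 : win x 2 i ≠ win x 2 rab := by
      intro h; have := congrFun h 1; rw [(hval i).2, (hval rab).2, hia2, hab2] at this; exact hab this
    have d3 : win x 2 i ≠ win x 2 rba := by
      intro h; have := congrFun h 0; rw [(hval i).1, (hval rba).1, hia, hba1] at this; exact hab this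
    have d4 : win x 2 j ≠ win x 2 rab := by
      intro h; have := congrFun h 0; rw [(hval j).1, (hval rab).1, hjb, hab1] at this; exact hab this.symm
    have d5 : win x 2 j ≠ win x 2 rba := by
      intro h; have := congrFun h 1; rw [(hval j).2, (hval rba).2, hjb2, hba2] at this; exact hab this.symm
    have d6 : win x 2 rab ≠ win x 2 rba := by
      intro h; have := congrFun h 0; rw [(hval rab).1, (hval rba).1, hab1, hba1] at this; exact hab this
    rw [Finset.card_insert_of_notMem (by simp [d1, d2, d3]),
      Finset.card_insert_of_notMem (by simp [d4, d5]),
      Finset.card_insert_of_notMem (by simp [d6]), Finset.card_singleton]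
  have := Finset.card_le_card hsub
  rw [hcard4, hcard 2] at this
  omega

end StAux
end Chunk4
section Chunk5
set_option linter.unusedSectionVars false
set_option maxHeartbeats 2000000
variable {A : Type*} [Fintype A] {x : ℤ → A} {a b : A}

open Finset

namespace StAux

attribute [local instance] Classical.propDecidable

lemma balanced (hcard : ∀ n : ℕ, (Fac x n).card = n + 1)
    (hUR : UniformlyRecurrent x) (hab : a ≠ b) (h2 : ∀ i : ℤ, x i = a ∨ x i = b) :
    ∀ (m : ℕ) (i j : ℤ), cnt x a i m ≤ cnt x a j m + 1 := by
  by_contra hbad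
  push_neg at hbad
  obtain ⟨m1, i1, j1, hm1⟩ := hbad
  have hPex' : ∃ m : ℕ, ∃ i j : ℤ, cnt x a j m + 1 < cnt x a i m := ⟨m1, i1, j1, hm1⟩
  classical
  obtain ⟨i, j, hij⟩ := Nat.find_spec hPex'
  have bal0 : ∀ m' : ℕ, m' < Nat.find hPex' → ∀ i' j' : ℤ, cnt x a i' m' ≤ cnt x a j' m' + 1 := by
    intro m' hm' i' j'
    have := Nat.find_min hPex' hm'
    push_neg at this
    exact this i' j'
  have hm2 : 2 ≤ Nat.find hPex' := by
    by_contra hlt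
    push_neg at hlt
    have h0 := cnt_zero x a i
    have h0' := cnt_zero x a j
    have h1 := cnt_le x a i 1
    have h1' := cnt_le x a j 1
    interval_cases h : Nat.find hPex' <;> omega
  obtain ⟨n, hmn⟩ : ∃ n : ℕ, Nat.find hPex' = n + 2 := ⟨Nat.find hPex' - 2, by omega⟩
  rw [hmn] at hij
  have bal : ∀ m' : ℕ, m' < n + 2 → ∀ i' j' : ℤ, cnt x a i' m' ≤ cnt x a j' m' + 1 := by
    intro m' hm'
    exact bal0 m' (by omega)
  -- count decompositions at the ends
  have eci : cnt x a i (n + 2) = (if x i = a then 1 else 0) + cnt x a (i + 1) (n + 1) :=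
    cnt_cons x a i (n + 1)
  have ecj : cnt x a j (n + 2) = (if x j = a then 1 else 0) + cnt x a (j + 1) (n + 1) :=
    cnt_cons x a j (n + 1)
  have esi : cnt x a i (n + 2)
      = cnt x a i (n + 1) + (if x (i + ((n + 1 : ℕ) : ℤ)) = a then 1 else 0) :=
    cnt_succ x a i (n + 1)
  have esj : cnt x a j (n + 2)
      = cnt x a j (n + 1) + (if x (j + ((n + 1 : ℕ) : ℤ)) = a then 1 else 0) :=
    cnt_succ x a j (n + 1)
  have hbal1 := bal (n + 1) (by omega) (i + 1) (j + 1)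
  have hbal1' := bal (n + 1) (by omega) i j
  -- front letters
  have hxi : x i = a := by
    by_contra hxia
    rw [if_neg hxia] at eci
    have : (if x j = a then 1 else 0) + cnt x a (j + 1) (n + 1) ≥ cnt x a (j + 1) (n + 1) := by omega
    omega
  have hxj : ¬ (x j = a) := by
    intro hxja
    rw [if_pos hxja] at ecj
    rw [if_pos hxi] at eci
    omega
  have hfront : cnt x a (i + 1) (n + 1) = cnt x a (j + 1) (n + 1) + 1 := by
    rw [if_pos hxi] at eci
    rw [if_neg hxj] at ecj
    omega
  -- back letters
  have hxi2 : x (i + ((n + 1 : ℕ) : ℤ)) = a := by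
    by_contra hxia
    rw [if_neg hxia] at esi
    have : (if x (j + ((n + 1 : ℕ) : ℤ)) = a then 1 else 0) ≤ 1 := by split <;> omega
    omega
  have hxj2 : ¬ (x (j + ((n + 1 : ℕ) : ℤ)) = a) := by
    intro hxja
    rw [if_pos hxja] at esj
    rw [if_pos hxi2] at esi
    omega
  have hback : cnt x a i (n + 1) = cnt x a j (n + 1) + 1 := by
    rw [if_pos hxi2] at esi
    rw [if_neg hxj2] at esj
    omega
  -- middle counts are equal
  have emi : cnt x a (i + 1) (n + 1) = cnt x a (i + 1) n + (if x (i + 1 + (n : ℕ)) = a then 1 else 0) :=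
    cnt_succ x a (i + 1) n
  have emj : cnt x a (j + 1) (n + 1) = cnt x a (j + 1) n + (if x (j + 1 + (n : ℕ)) = a then 1 else 0) :=
    cnt_succ x a (j + 1) n
  have hposi : i + 1 + ((n : ℕ) : ℤ) = i + ((n + 1 : ℕ) : ℤ) := by push_cast; ring
  have hposj : j + 1 + ((n : ℕ) : ℤ) = j + ((n + 1 : ℕ) : ℤ) := by push_cast; ring
  rw [hposi, if_pos hxi2] at emi
  rw [hposj, if_neg hxj2] at emj
  have hmid : cnt x a (i + 1) n = cnt x a (j + 1) n := by omega
  -- the middles agree : s = t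
  have hst : ∀ t : ℕ, t < n → x (i + 1 + (t : ℕ)) = x (j + 1 + (t : ℕ)) := by
    by_contra hdiff
    push_neg at hdiff
    have hQ : ∃ t : ℕ, t < n ∧ x (i + 1 + (t : ℕ)) ≠ x (j + 1 + (t : ℕ)) := hdiff
    obtain ⟨hdn, hdne⟩ := Nat.find_spec hQ
    set d := Nat.find hQ with hddef
    have hagree : ∀ e : ℕ, e < d → x (i + 1 + (e : ℕ)) = x (j + 1 + (e : ℕ)) := by
      intro e he
      have := Nat.find_min hQ he
      push_neg at this
      exact this (by omega)
    have hE : cnt x a (j + 1) d = cnt x a (i + 1) d :=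
      (cnt_congr x a (fun t ht => hagree t ht)).symm
    have edi : cnt x a (i + 1) (d + 1) = cnt x a (i + 1) d + (if x (i + 1 + (d : ℕ)) = a then 1 else 0) :=
      cnt_succ x a (i + 1) d
    have edj : cnt x a (j + 1) (d + 1) = cnt x a (j + 1) d + (if x (j + 1 + (d : ℕ)) = a then 1 else 0) :=
      cnt_succ x a (j + 1) d
    rcases h2 (i + 1 + (d : ℕ)) with hia | hib
    · -- case (a, b) : prefix windows of length d + 2
      have hjb : ¬ (x (j + 1 + (d : ℕ)) = a) := fun h => hdne (by rw [hia, h])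
      have e1 : cnt x a i (d + 2) = (if x i = a then 1 else 0) + cnt x a (i + 1) (d + 1) :=
        cnt_cons x a i (d + 1)
      have e2 : cnt x a j (d + 2) = (if x j = a then 1 else 0) + cnt x a (j + 1) (d + 1) :=
        cnt_cons x a j (d + 1)
      rw [if_pos hxi] at e1
      rw [if_neg hxj] at e2
      rw [if_pos hia] at edi
      rw [if_neg hjb] at edj
      have := bal (d + 2) (by omega) i j
      omega
    · -- case (b, a) : suffix windows of length n - d
      have hja : x (j + 1 + (d : ℕ)) = a := by
        rcases h2 (j + 1 + (d : ℕ)) with h | h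
        · exact h
        · exact absurd (hib.trans h.symm) hdne
      have hib' : ¬ (x (i + 1 + (d : ℕ)) = a) := by
        rw [hib]; exact fun h => hab h.symm
      rw [if_neg hib'] at edi
      rw [if_pos hja] at edj
      have hsplit : (d + 1) + (n - d) = n + 1 := by omega
      have e1 : cnt x a (i + 1) ((d + 1) + (n - d))
          = cnt x a (i + 1) (d + 1) + cnt x a (i + 1 + ((d + 1 : ℕ) : ℤ)) (n - d) :=
        cnt_add x a (i + 1) (d + 1) (n - d)
      have e2 : cnt x a (j + 1) ((d + 1) + (n - d))
          = cnt x a (j + 1) (d + 1) + cnt x a (j + 1 + ((d + 1 : ℕ) : ℤ)) (n - d) :=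
        cnt_add x a (j + 1) (d + 1) (n - d)
      rw [hsplit] at e1 e2
      have := bal (n - d) (by omega) (i + 1 + ((d + 1 : ℕ) : ℤ)) (j + 1 + ((d + 1 : ℕ) : ℤ))
      omega
  -- n = 0 special case
  rcases Nat.eq_zero_or_pos n with hn0 | hnpos
  · subst hn0
    have hxjb : x j = b := (h2 j).resolve_left hxj
    have hia2 : x (i + 1) = a := by
      rw [show i + 1 = i + ((0 + 1 : ℕ) : ℤ) by push_cast; ring]; exact hxi2
    have hjb2 : x (j + 1) = b := by
      refine (h2 (j + 1)).resolve_left ?_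
      rw [show j + 1 = j + ((0 + 1 : ℕ) : ℤ) by push_cast; ring]
      exact hxj2
    exact no_unbalance_len2 hcard hUR hab h2 hxi hia2 hxjb hjb2
  have hn1 : 1 ≤ n := hnpos
  have hxjb : x j = b := (h2 j).resolve_left hxj
  have hxj2b : x (j + ((n + 1 : ℕ) : ℤ)) = b := (h2 _).resolve_left hxj2
  -- palindromicity of the middle word
  have hpal : ∀ t : ℕ, t < n → x (i + 1 + (t : ℕ)) = x (i + 1 + ((n - 1 - t : ℕ) : ℤ)) := by
    by_contra hdiff
    push_neg at hdiff
    have hQ : ∃ t : ℕ, t < n ∧ x (i + 1 + (t : ℕ)) ≠ x (i + 1 + ((n - 1 - t : ℕ) : ℤ)) := hdiff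
    obtain ⟨hdn, hdne⟩ := Nat.find_spec hQ
    set d := Nat.find hQ with hddef
    have hmirror : d < n - 1 - d := by
      have hR : (n - 1 - d) < n ∧
          x (i + 1 + ((n - 1 - d : ℕ) : ℤ)) ≠ x (i + 1 + ((n - 1 - (n - 1 - d) : ℕ) : ℤ)) := by
        refine ⟨by omega, ?_⟩
        rw [show n - 1 - (n - 1 - d) = d by omega]
        exact fun h => hdne h.symm
      have hge : d ≤ n - 1 - d := by
        by_contra hlt
        push_neg at hlt
        exact (Nat.find_min hQ (show n - 1 - d < d by omega)) hR
      rcases eq_or_lt_of_le hge with he | h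
      · exfalso
        apply hdne
        rw [show (n - 1 - d : ℕ) = d by omega]
      · exact h
    have hagree : ∀ e : ℕ, e < d → x (i + 1 + (e : ℕ)) = x (i + 1 + ((n - 1 - e : ℕ) : ℤ)) := by
      intro e he
      have := Nat.find_min hQ he
      push_neg at this
      exact this (by omega)
    have Emirror : cnt x a (i + 1 + ((n - d : ℕ) : ℤ)) d = cnt x a (i + 1) d := by
      rw [cnt, cnt]
      conv_rhs => rw [← Finset.sum_range_reflect]
      refine Finset.sum_congr rfl (fun t ht => ?_)
      rw [Finset.mem_range] at ht
      have h1 := hagree (d - 1 - t) (by omega)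
      rw [show (n - 1 - (d - 1 - t) : ℕ) = n - d + t by omega] at h1
      rw [show i + 1 + ((n - d : ℕ) : ℤ) + ((t : ℕ) : ℤ) = i + 1 + ((n - d + t : ℕ) : ℤ) by omega]
      rw [← h1]
    have hlast_i : x (i + 1 + ((n : ℕ) : ℤ)) = a := by rw [hposi]; exact hxi2
    have hlast_j : ¬ (x (j + 1 + ((n : ℕ) : ℤ)) = a) := by rw [hposj]; exact hxj2
    rcases h2 (i + 1 + ((d : ℕ) : ℤ)) with hva | hvb
    · -- bad pair is (a, b) : compare window at i with mirror window on the j side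
      have hmb : ¬ (x (i + 1 + ((n - 1 - d : ℕ) : ℤ)) = a) := fun h => hdne (hva.trans h.symm)
      set sq : ℤ := j + 1 + ((n - 1 - d : ℕ) : ℤ) with hsqdef
      have eq1 : cnt x a sq (d + 2) = (if x sq = a then 1 else 0) + cnt x a (sq + 1) (d + 1) :=
        cnt_cons x a sq (d + 1)
      have hsqb : ¬ (x sq = a) := by
        rw [hsqdef]
        have := hst (n - 1 - d) (by omega)
        rw [← this]
        exact hmb
      rw [if_neg hsqb] at eq1
      have eq2 : cnt x a (sq + 1) (d + 1)
          = cnt x a (sq + 1) d + (if x (sq + 1 + (d : ℕ)) = a then 1 else 0) :=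
        cnt_succ x a (sq + 1) d
      have hsql : ¬ (x (sq + 1 + (d : ℕ)) = a) := by
        rw [show sq + 1 + ((d : ℕ) : ℤ) = j + 1 + ((n : ℕ) : ℤ) by rw [hsqdef]; omega]
        exact hlast_j
      rw [if_neg hsql] at eq2
      have eq3 : cnt x a (sq + 1) d = cnt x a (i + 1 + ((n - d : ℕ) : ℤ)) d := by
        refine cnt_congr x a (fun t ht => ?_)
        rw [show sq + 1 + ((t : ℕ) : ℤ) = j + 1 + ((n - d + t : ℕ) : ℤ) by rw [hsqdef]; omega]
        rw [show i + 1 + ((n - d : ℕ) : ℤ) + ((t : ℕ) : ℤ) = i + 1 + ((n - d + t : ℕ) : ℤ) by omega]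
        exact (hst (n - d + t) (by omega)).symm
      have eqP : cnt x a i (d + 2) = (if x i = a then 1 else 0) + cnt x a (i + 1) (d + 1) :=
        cnt_cons x a i (d + 1)
      have eqP2 : cnt x a (i + 1) (d + 1)
          = cnt x a (i + 1) d + (if x (i + 1 + (d : ℕ)) = a then 1 else 0) :=
        cnt_succ x a (i + 1) d
      rw [if_pos hxi] at eqP
      rw [if_pos hva] at eqP2
      have := bal (d + 2) (by omega) i sq
      omega
    · -- bad pair is (b, a) : compare mirror window on the i side with window at j
      have hma : x (i + 1 + ((n - 1 - d : ℕ) : ℤ)) = a := by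
        rcases h2 (i + 1 + ((n - 1 - d : ℕ) : ℤ)) with h | h
        · exact h
        · exact absurd (hvb.trans h.symm) hdne
      set si : ℤ := i + 1 + ((n - 1 - d : ℕ) : ℤ) with hsidef
      have eq1 : cnt x a si (d + 2) = (if x si = a then 1 else 0) + cnt x a (si + 1) (d + 1) :=
        cnt_cons x a si (d + 1)
      rw [if_pos hma] at eq1
      have eq2 : cnt x a (si + 1) (d + 1)
          = cnt x a (si + 1) d + (if x (si + 1 + (d : ℕ)) = a then 1 else 0) :=
        cnt_succ x a (si + 1) d
      have hsil : x (si + 1 + ((d : ℕ) : ℤ)) = a := by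
        rw [show si + 1 + ((d : ℕ) : ℤ) = i + 1 + ((n : ℕ) : ℤ) by rw [hsidef]; omega]
        exact hlast_i
      rw [if_pos hsil] at eq2
      have eq3 : cnt x a (si + 1) d = cnt x a (i + 1 + ((n - d : ℕ) : ℤ)) d := by
        refine cnt_congr x a (fun t ht => ?_)
        rw [show si + 1 + ((t : ℕ) : ℤ) = i + 1 + ((n - d + t : ℕ) : ℤ) by rw [hsidef]; omega]
        rw [show i + 1 + ((n - d : ℕ) : ℤ) + ((t : ℕ) : ℤ) = i + 1 + ((n - d + t : ℕ) : ℤ) by omega]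
      have eqP : cnt x a j (d + 2) = (if x j = a then 1 else 0) + cnt x a (j + 1) (d + 1) :=
        cnt_cons x a j (d + 1)
      rw [if_neg hxj] at eqP
      have eqP2 : cnt x a (j + 1) (d + 1)
          = cnt x a (j + 1) d + (if x (j + 1 + (d : ℕ)) = a then 1 else 0) :=
        cnt_succ x a (j + 1) d
      have hjl : ¬ (x (j + 1 + ((d : ℕ) : ℤ)) = a) := by
        rw [← hst d hdn]
        rw [hvb]
        exact fun h => hab h.symm
      rw [if_neg hjl] at eqP2
      have eqE : cnt x a (j + 1) d = cnt x a (i + 1) d :=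
        (cnt_congr x a (fun t ht => hst t (by omega))).symm
      have := bal (d + 2) (by omega) si j
      omega
  -- Part 2 : the bispecial word w = x[i+1 .. i+n] and its return structure
  have hwF : win x n (i + 1) ∈ Fac x n := win_mem_Fac x n (i + 1)
  have hw_j : win x n (j + 1) = win x n (i + 1) := by
    rw [win_eq_iff]; exact fun t ht => (hst t ht).symm
  have hsnoc_i : Fin.snoc (win x n (i + 1)) a = win x (n + 1) (i + 1) := by
    rw [win_succ_snoc x n (i + 1), hposi, hxi2]
  have hsnoc_j : Fin.snoc (win x n (i + 1)) b = win x (n + 1) (j + 1) := by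
    rw [win_succ_snoc x n (j + 1), hw_j, hposj, hxj2b]
  have hwa : a ∈ rext x n (win x n (i + 1)) := by
    rw [mem_rext, hsnoc_i]; exact win_mem_Fac x (n + 1) (i + 1)
  have hwb : b ∈ rext x n (win x n (i + 1)) := by
    rw [mem_rext, hsnoc_j]; exact win_mem_Fac x (n + 1) (j + 1)
  have hbr_i : x ((i + 1) + ((n : ℕ) : ℤ)) = a := by rw [hposi]; exact hxi2
  have hbr_j : x ((j + 1) + ((n : ℕ) : ℤ)) = b := by rw [hposj]; exact hxj2b
  -- a transition from a b-branch to an a-branch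
  obtain ⟨r, q, hrw, hrb, hq1, hocc, hminr, hnext_a⟩ :=
    exists_trans (c := b) (d := a) hcard hUR hab h2 (Or.inr ⟨rfl, rfl⟩) hw_j hbr_j
      (rd := i + 1) rfl hbr_i
  have hqn : q ≤ (n : ℤ) + 1 := fret_le hcard hab hn1 hwF hwa hwb hq1 hocc hminr
  have hlam : x (r + q - 1) = b :=
    lam_letter hn1 hpal hrw hq1 hqn hocc hrb
  -- a transition from an a-branch to a b-branch
  obtain ⟨r', q', hrw', hra', hq1', hocc', hminr', hnext_b⟩ :=
    exists_trans (c := a) (d := b) hcard hUR hab h2 (Or.inl ⟨rfl, rfl⟩) (r0 := i + 1) rfl hbr_i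
      hw_j hbr_j
  have hqn' : q' ≤ (n : ℤ) + 1 := fret_le hcard hab hn1 hwF hwa hwb hq1' hocc' hminr'
  have hlam' : x (r' + q' - 1) = a :=
    lam_letter hn1 hpal hrw' hq1' hqn' hocc' hra'
  -- the word b·w also occurs at r + q - 1, followed there by the letter a
  have hkey : win x (n + 1) (r + q - 1) = win x (n + 1) j := by
    rw [win_eq_iff]
    intro t ht
    rcases Nat.eq_zero_or_pos t with rfl | htpos
    · rw [show r + q - 1 + ((0 : ℕ) : ℤ) = r + q - 1 by push_cast; ring,
        show j + ((0 : ℕ) : ℤ) = j by push_cast; ring, hlam, hxjb]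
    · have htn : t - 1 < n := by omega
      have h1 : x ((r + q) + ((t - 1 : ℕ) : ℤ)) = x ((i + 1) + ((t - 1 : ℕ) : ℤ)) :=
        win_eq_iff.1 hocc (t - 1) htn
      rw [show r + q - 1 + ((t : ℕ) : ℤ) = (r + q) + ((t - 1 : ℕ) : ℤ) by omega,
        show j + ((t : ℕ) : ℤ) = (j + 1) + ((t - 1 : ℕ) : ℤ) by omega, h1]
      exact hst (t - 1) htn
  -- the word a·w also occurs at r' + q' - 1, followed there by the letter b
  have hkey' : win x (n + 1) (r' + q' - 1) = win x (n + 1) i := by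
    rw [win_eq_iff]
    intro t ht
    rcases Nat.eq_zero_or_pos t with rfl | htpos
    · rw [show r' + q' - 1 + ((0 : ℕ) : ℤ) = r' + q' - 1 by push_cast; ring,
        show i + ((0 : ℕ) : ℤ) = i by push_cast; ring, hlam', hxi]
    · have htn : t - 1 < n := by omega
      have h1 : x ((r' + q') + ((t - 1 : ℕ) : ℤ)) = x ((i + 1) + ((t - 1 : ℕ) : ℤ)) :=
        win_eq_iff.1 hocc' (t - 1) htn
      rw [show r' + q' - 1 + ((t : ℕ) : ℤ) = (r' + q') + ((t - 1 : ℕ) : ℤ) by omega,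
        show i + ((t : ℕ) : ℤ) = (i + 1) + ((t - 1 : ℕ) : ℤ) by omega, h1]
  -- both extensions of a·w and of b·w are factors
  have hy1a : a ∈ rext x (n + 1) (win x (n + 1) i) := by
    rw [mem_rext]
    have : Fin.snoc (win x (n + 1) i) a = win x (n + 2) i := by
      rw [win_succ_snoc x (n + 1) i, hxi2]
    rw [this]; exact win_mem_Fac x (n + 2) i
  have hy1b : b ∈ rext x (n + 1) (win x (n + 1) i) := by
    rw [mem_rext]
    have : Fin.snoc (win x (n + 1) i) b = win x (n + 2) (r' + q' - 1) := by
      rw [win_succ_snoc x (n + 1) (r' + q' - 1), ← hkey',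
        show r' + q' - 1 + ((n + 1 : ℕ) : ℤ) = r' + q' + ((n : ℕ) : ℤ) by push_cast; ring,
        hnext_b]
    rw [this]; exact win_mem_Fac x (n + 2) (r' + q' - 1)
  have hy2b : b ∈ rext x (n + 1) (win x (n + 1) j) := by
    rw [mem_rext]
    have : Fin.snoc (win x (n + 1) j) b = win x (n + 2) j := by
      rw [win_succ_snoc x (n + 1) j, hxj2b]
    rw [this]; exact win_mem_Fac x (n + 2) j
  have hy2a : a ∈ rext x (n + 1) (win x (n + 1) j) := by
    rw [mem_rext]
    have : Fin.snoc (win x (n + 1) j) a = win x (n + 2) (r + q - 1) := by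
      rw [win_succ_snoc x (n + 1) (r + q - 1), ← hkey,
        show r + q - 1 + ((n + 1 : ℕ) : ℤ) = r + q + ((n : ℕ) : ℤ) by push_cast; ring,
        hnext_a]
    rw [this]; exact win_mem_Fac x (n + 2) (r + q - 1)
  -- final count : too many factors of length n + 2
  have hne_y : win x (n + 1) i ≠ win x (n + 1) j := by
    intro h
    have := congrFun h ⟨0, by omega⟩
    have e1 : win x (n + 1) i ⟨0, by omega⟩ = x i := by
      show x (i + ((0 : ℕ) : ℤ)) = x i; norm_num
    have e2 : win x (n + 1) j ⟨0, by omega⟩ = x j := by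
      show x (j + ((0 : ℕ) : ℤ)) = x j; norm_num
    rw [e1, e2, hxi, hxjb] at this
    exact hab this
  have two_le : ∀ y : Fin (n + 1) → A, a ∈ rext x (n + 1) y → b ∈ rext x (n + 1) y →
      2 ≤ (rext x (n + 1) y).card := by
    intro y hy1 hy2
    have hsub : ({a, b} : Finset A) ⊆ rext x (n + 1) y := by
      intro c hc
      rcases Finset.mem_insert.1 hc with h | h
      · rwa [h]
      · rw [Finset.mem_singleton.1 h]; exact hy2
    have : ({a, b} : Finset A).card = 2 := by
      rw [Finset.card_insert_of_notMem (by simpa using hab), Finset.card_singleton]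
    calc 2 = ({a, b} : Finset A).card := this.symm
      _ ≤ _ := Finset.card_le_card hsub
  have hy1two := two_le _ hy1a hy1b
  have hy2two := two_le _ hy2a hy2b
  have hy2mem : win x (n + 1) j ∈ Fac x (n + 1) := win_mem_Fac x (n + 1) j
  have hy1mem : win x (n + 1) i ∈ ((Fac x (n + 1)).erase (win x (n + 1) j)) :=
    Finset.mem_erase.2 ⟨hne_y, win_mem_Fac x (n + 1) i⟩
  have hsum := sum_rext x (n + 1)
  rw [hcard (n + 2)] at hsum
  have e1 : ∑ z ∈ (Fac x (n + 1)).erase (win x (n + 1) j), (rext x (n + 1) z).card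
      + (rext x (n + 1) (win x (n + 1) j)).card
      = ∑ z ∈ Fac x (n + 1), (rext x (n + 1) z).card :=
    Finset.sum_erase_add _ _ hy2mem
  have e2 : ∑ z ∈ ((Fac x (n + 1)).erase (win x (n + 1) j)).erase (win x (n + 1) i),
        (rext x (n + 1) z).card + (rext x (n + 1) (win x (n + 1) i)).card
      = ∑ z ∈ (Fac x (n + 1)).erase (win x (n + 1) j), (rext x (n + 1) z).card :=
    Finset.sum_erase_add _ _ hy1mem
  have e3 : (((Fac x (n + 1)).erase (win x (n + 1) j)).erase (win x (n + 1) i)).card • 1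
      ≤ ∑ z ∈ ((Fac x (n + 1)).erase (win x (n + 1) j)).erase (win x (n + 1) i),
          (rext x (n + 1) z).card :=
    Finset.card_nsmul_le_sum _ _ _ (fun z hz =>
      rext_nonempty (Finset.mem_of_mem_erase (Finset.mem_of_mem_erase hz)))
  have c1 : ((Fac x (n + 1)).erase (win x (n + 1) j)).card = n + 1 := by
    rw [Finset.card_erase_of_mem hy2mem, hcard (n + 1)]
    omega
  have c2 : (((Fac x (n + 1)).erase (win x (n + 1) j)).erase (win x (n + 1) i)).card = n := by
    rw [Finset.card_erase_of_mem hy1mem, c1]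
    omega
  rw [c2, smul_eq_mul, mul_one] at e3
  omega



end StAux
end Chunk5
section Chunk6
set_option linter.unusedSectionVars false
set_option maxHeartbeats 2000000
variable {A : Type*} [Fintype A] {x : ℤ → A} {a b : A}

open Finset

namespace StAux

attribute [local instance] Classical.propDecidable

lemma tail_periodic_false (hcard : ∀ n : ℕ, (Fac x n).card = n + 1)
    (hUR : UniformlyRecurrent x) {v : ℕ} (hv : 1 ≤ v) {N : ℤ}
    (h : ∀ i : ℤ, N ≤ i → x (i + (v : ℕ)) = x i) : False := by
  classical
  have key : ∀ z : Fin (v + 1) → A, z ∈ Fac x (v + 1) →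
      z (Fin.last v) = z ⟨0, by omega⟩ := by
    intro z hz
    obtain ⟨r0, hr0⟩ := mem_Fac_iff.1 hz
    obtain ⟨r, hrN, hr⟩ := exists_occ_ge hUR (v + 1) r0 N
    have hzwin : win x (v + 1) r = z := hr.trans hr0
    have e1 : z (Fin.last v) = x (r + (v : ℕ)) := by rw [← hzwin]; rfl
    have e0 : z ⟨0, by omega⟩ = x (r + ((0 : ℕ) : ℤ)) := by rw [← hzwin]; rfl
    rw [e1, e0, h r hrN, show r + ((0 : ℕ) : ℤ) = r by push_cast; ring]
  have hinj : Set.InjOn Fin.init ((Fac x (v + 1) : Finset (Fin (v + 1) → A)) : Set (Fin (v + 1) → A)) := by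
    intro z1 h1 z2 h2 hinit
    funext t
    refine Fin.lastCases ?_ (fun s => ?_) t
    · rw [key z1 (by simpa using h1), key z2 (by simpa using h2)]
      have h0 := congrFun hinit ⟨0, by omega⟩
      have e1 : Fin.init z1 ⟨0, by omega⟩ = z1 ⟨0, by omega⟩ := by
        show z1 (Fin.castSucc ⟨0, by omega⟩) = z1 ⟨0, by omega⟩
        congr 1
      have e2 : Fin.init z2 ⟨0, by omega⟩ = z2 ⟨0, by omega⟩ := by
        show z2 (Fin.castSucc ⟨0, by omega⟩) = z2 ⟨0, by omega⟩
        congr 1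
      rw [e1, e2] at h0
      exact h0
    · exact congrFun hinit s
  have hmaps : ∀ z ∈ Fac x (v + 1), Fin.init z ∈ Fac x v := by
    intro z hz
    obtain ⟨r, hr⟩ := mem_Fac_iff.1 hz
    rw [← hr, init_win]
    exact win_mem_Fac x v r
  have hle := Finset.card_le_card_of_injOn Fin.init hmaps hinj
  rw [hcard (v + 1), hcard v] at hle
  omega

/-- minimal number of occurrences of `a` in windows of length `m` -/
noncomputable def gam (x : ℤ → A) (a : A) (m : ℕ) : ℕ :=
  sInf (Set.range fun i : ℤ => cnt x a i m)

lemma gam_le (x : ℤ → A) (a : A) (i : ℤ) (m : ℕ) : gam x a m ≤ cnt x a i m :=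
  Nat.sInf_le ⟨i, rfl⟩

lemma exists_gam (x : ℤ → A) (a : A) (m : ℕ) : ∃ i : ℤ, cnt x a i m = gam x a m := by
  have hne : (Set.range fun i : ℤ => cnt x a i m).Nonempty := ⟨cnt x a 0 m, 0, rfl⟩
  exact Nat.sInf_mem hne

lemma gam_le_self (x : ℤ → A) (a : A) (m : ℕ) : gam x a m ≤ m := by
  obtain ⟨i, hi⟩ := exists_gam x a m
  rw [← hi]; exact cnt_le x a i m

lemma gam_zero (x : ℤ → A) (a : A) : gam x a 0 = 0 := by
  have := gam_le_self x a 0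
  omega

lemma cnt_le_gam (hbal : ∀ (m : ℕ) (i j : ℤ), cnt x a i m ≤ cnt x a j m + 1)
    (i : ℤ) (m : ℕ) : cnt x a i m ≤ gam x a m + 1 := by
  obtain ⟨j, hj⟩ := exists_gam x a m
  rw [← hj]
  exact hbal m i j

lemma gam_superadd (m l : ℕ) : gam x a m + gam x a l ≤ gam x a (m + l) := by
  obtain ⟨i, hi⟩ := exists_gam x a (m + l)
  rw [← hi, cnt_add]
  exact Nat.add_le_add (gam_le x a i m) (gam_le x a _ l)

lemma gam_subadd (hbal : ∀ (m : ℕ) (i j : ℤ), cnt x a i m ≤ cnt x a j m + 1) (m l : ℕ) : gam x a (m + l) ≤ gam x a m + gam x a l + 1 := by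
  obtain ⟨i, hi⟩ := exists_gam x a m
  calc gam x a (m + l) ≤ cnt x a i (m + l) := gam_le x a i (m + l)
    _ = cnt x a i m + cnt x a (i + (m : ℕ)) l := cnt_add x a i m l
    _ ≤ gam x a m + (gam x a l + 1) := by
        rw [hi]
        exact Nat.add_le_add le_rfl (cnt_le_gam hbal _ l)
    _ = gam x a m + gam x a l + 1 := by ring

lemma gam_mul_ge (k m : ℕ) : k * gam x a m ≤ gam x a (k * m) := by
  induction k with
  | zero => simp [gam_zero]
  | succ k ih =>
    have h1 := gam_superadd (x := x) (a := a) (k * m) m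
    have h2 : (k + 1) * m = k * m + m := by ring
    have h3 : (k + 1) * gam x a m = k * gam x a m + gam x a m := by ring
    rw [h2, h3]
    omega

lemma gam_mul_le (hbal : ∀ (m : ℕ) (i j : ℤ), cnt x a i m ≤ cnt x a j m + 1) (k m : ℕ) : gam x a ((k + 1) * m) + 1 ≤ (k + 1) * (gam x a m + 1) := by
  induction k with
  | zero => simp
  | succ k ih =>
    have h1 := gam_subadd hbal ((k + 1) * m) m
    have h2 : (k + 1 + 1) * m = (k + 1) * m + m := by ring
    have h3 : (k + 1 + 1) * (gam x a m + 1) = (k + 1) * (gam x a m + 1) + (gam x a m + 1) := by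
      ring
    rw [h2, h3]
    omega

lemma gam_cross (hbal : ∀ (m : ℕ) (i j : ℤ), cnt x a i m ≤ cnt x a j m + 1)
    (k m : ℕ) (hk : 1 ≤ k) (hm : 1 ≤ m) :
    m * gam x a k < k * (gam x a m + 1) := by
  have h1 := gam_mul_ge (x := x) (a := a) m k
  have h2 := gam_mul_le hbal (k - 1) m
  have h3 : k - 1 + 1 = k := by omega
  rw [h3] at h2
  have h4 : m * k = k * m := by ring
  rw [h4] at h1
  exact lt_of_le_of_lt h1 (Nat.lt_of_succ_le h2)

/-- the frequency of the letter `a` -/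
noncomputable def bet (x : ℤ → A) (a : A) : ℝ :=
  sSup ((fun m : ℕ => (gam x a m : ℝ) / m) '' {m : ℕ | 1 ≤ m})

lemma bet_bddAbove :
    BddAbove ((fun m : ℕ => (gam x a m : ℝ) / m) '' {m : ℕ | 1 ≤ m}) := by
  refine ⟨1, ?_⟩
  rintro y ⟨m, hm, rfl⟩
  have h1 : (gam x a m : ℝ) ≤ (m : ℝ) := by exact_mod_cast gam_le_self x a m
  have hm0 : (0 : ℝ) < m := by exact_mod_cast hm
  exact div_le_one_of_le₀ h1 (le_of_lt hm0)

lemma bet_nonempty :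
    ((fun m : ℕ => (gam x a m : ℝ) / m) '' {m : ℕ | 1 ≤ m}).Nonempty :=
  ⟨_, ⟨1, by simp, rfl⟩⟩

lemma bet_le_one : bet x a ≤ 1 := by
  refine csSup_le bet_nonempty ?_
  rintro y ⟨m, hm, rfl⟩
  have h1 : (gam x a m : ℝ) ≤ (m : ℝ) := by exact_mod_cast gam_le_self x a m
  have hm0 : (0 : ℝ) < m := by exact_mod_cast hm
  exact div_le_one_of_le₀ h1 (le_of_lt hm0)

lemma betB1 (m : ℕ) (hm : 1 ≤ m) : (gam x a m : ℝ) ≤ (m : ℝ) * bet x a := by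
  have hmem : (gam x a m : ℝ) / m ∈
      ((fun m : ℕ => (gam x a m : ℝ) / m) '' {m : ℕ | 1 ≤ m}) := ⟨m, by simpa using hm, rfl⟩
  have hle := le_csSup bet_bddAbove hmem
  have hm0 : (0 : ℝ) < m := by exact_mod_cast hm
  have := mul_le_mul_of_nonneg_left hle (le_of_lt hm0)
  calc (gam x a m : ℝ) = (m : ℝ) * ((gam x a m : ℝ) / m) := by field_simp
    _ ≤ (m : ℝ) * bet x a := this

lemma betB2 (hbal : ∀ (m : ℕ) (i j : ℤ), cnt x a i m ≤ cnt x a j m + 1)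
    (m : ℕ) (hm : 1 ≤ m) : (m : ℝ) * bet x a ≤ (gam x a m : ℝ) + 1 := by
  have hub : bet x a ≤ ((gam x a m : ℝ) + 1) / m := by
    refine csSup_le bet_nonempty ?_
    rintro y ⟨k, hk, rfl⟩
    have hk0 : (0 : ℝ) < k := by exact_mod_cast hk
    have hm0 : (0 : ℝ) < m := by exact_mod_cast hm
    rw [div_le_div_iff₀ hk0 hm0]
    have := gam_cross hbal k m hk hm
    have hcast : (m : ℝ) * (gam x a k : ℝ) ≤ (k : ℝ) * ((gam x a m : ℝ) + 1) := by
      exact_mod_cast le_of_lt this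
    nlinarith
  have hm0 : (0 : ℝ) < m := by exact_mod_cast hm
  have := mul_le_mul_of_nonneg_left hub (le_of_lt hm0)
  calc (m : ℝ) * bet x a ≤ (m : ℝ) * (((gam x a m : ℝ) + 1) / m) := this
    _ = (gam x a m : ℝ) + 1 := by field_simp

/-- the counting function of the letter `a` on `[0, i)` (negative for `i < 0`). -/
noncomputable def cfun (x : ℤ → A) (a : A) (i : ℤ) : ℤ :=
  (cnt x a 0 i.toNat : ℤ) - (cnt x a i (-i).toNat : ℤ)

lemma cfun_succ (x : ℤ → A) (a : A) (i : ℤ) :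
    cfun x a (i + 1) = cfun x a i + (if x i = a then 1 else 0) := by
  classical
  rcases le_or_gt 0 i with h | h
  · have h1 : (i + 1).toNat = i.toNat + 1 := by omega
    have h2 : (-(i + 1)).toNat = 0 := by omega
    have h3 : (-i).toNat = 0 := by omega
    rw [cfun, cfun, h1, h2, h3, cnt_zero, cnt_zero, cnt_succ]
    have h4 : (0 : ℤ) + ((i.toNat : ℕ) : ℤ) = i := by omega
    rw [h4]
    split_ifs <;> push_cast <;> ring
  · have h1 : (i + 1).toNat = 0 := by omega
    have h3 : i.toNat = 0 := by omega
    have h2 : (-i).toNat = (-(i + 1)).toNat + 1 := by omega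
    rw [cfun, cfun, h1, h3, cnt_zero, h2, cnt_cons]
    split_ifs <;> push_cast <;> ring

lemma cfun_cnt (x : ℤ → A) (a : A) (i : ℤ) (m : ℕ) :
    cfun x a (i + (m : ℕ)) = cfun x a i + (cnt x a i m : ℤ) := by
  classical
  induction m with
  | zero => simp [cnt_zero]
  | succ m ih =>
    have h1 : i + ((m + 1 : ℕ) : ℤ) = (i + (m : ℕ)) + 1 := by push_cast; ring
    rw [h1, cfun_succ, ih, cnt_succ]
    split_ifs <;> push_cast <;> ring

end StAux
end Chunk6
section Chunk7
set_option linter.unusedSectionVars false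
set_option maxHeartbeats 2000000
variable {A : Type*} [Fintype A] {x : ℤ → A} {a b : A}

open Finset

namespace StAux

attribute [local instance] Classical.propDecidable

lemma cnt_blocks_ge (v : ℕ) : ∀ (k : ℕ) (jz : ℤ), k * gam x a v ≤ cnt x a jz (k * v) := by
  intro k
  induction k with
  | zero => intro jz; simp
  | succ k ih =>
    intro jz
    have h1 : (k + 1) * v = k * v + v := by ring
    rw [h1, cnt_add]
    have h2 := ih jz
    have h3 := gam_le x a (jz + ((k * v : ℕ) : ℤ)) v
    have h4 : (k + 1) * gam x a v = k * gam x a v + gam x a v := by ring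
    omega

lemma cnt_blocks_le (hbal : ∀ (m : ℕ) (i j : ℤ), cnt x a i m ≤ cnt x a j m + 1)
    (v : ℕ) : ∀ (k : ℕ) (jz : ℤ), cnt x a jz (k * v) ≤ k * (gam x a v + 1) := by
  intro k
  induction k with
  | zero => intro jz; simp [cnt_zero]
  | succ k ih =>
    intro jz
    have h1 : (k + 1) * v = k * v + v := by ring
    rw [h1, cnt_add]
    have h2 := ih jz
    have h3 := cnt_le_gam hbal (jz + ((k * v : ℕ) : ℤ)) v
    have h4 : (k + 1) * (gam x a v + 1) = k * (gam x a v + 1) + (gam x a v + 1) := by ring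
    omega

/-- If `v * bet` were an integer, the sequence would be eventually periodic. -/
lemma eventually_const_cnt (hbal : ∀ (m : ℕ) (i j : ℤ), cnt x a i m ≤ cnt x a j m + 1)
    {u : ℤ} {v : ℕ} (hv : 1 ≤ v) (hvb : (v : ℝ) * bet x a = (u : ℝ)) :
    ∃ (N : ℤ) (W : ℕ), ∀ i : ℤ, N ≤ i → cnt x a i v = W := by
  classical
  have hb1 := betB1 (x := x) (a := a) v hv
  have hb2 := betB2 hbal v hv
  rw [hvb] at hb1 hb2
  have hu1 : (gam x a v : ℤ) ≤ u := by exact_mod_cast hb1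
  have hu2 : u ≤ (gam x a v : ℤ) + 1 := by exact_mod_cast hb2
  -- general setup for both cases
  by_contra hno
  push_neg at hno
  -- decide the eventual value according to the case
  have hcase : u = (gam x a v : ℤ) ∨ u = (gam x a v : ℤ) + 1 := by omega
  -- in either case, windows with the "wrong" count occur arbitrarily far to the right
  have hwrong : ∃ W' : ℕ, ((W' = gam x a v ∧ u = (gam x a v : ℤ) + 1) ∨
      (W' = gam x a v + 1 ∧ u = (gam x a v : ℤ))) ∧
      ∀ N : ℤ, ∃ i : ℤ, N ≤ i ∧ cnt x a i v = W' := by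
    rcases hcase with hu | hu
    · refine ⟨gam x a v + 1, Or.inr ⟨rfl, hu⟩, ?_⟩
      intro N
      obtain ⟨i, hiN, hi⟩ := hno N (gam x a v)
      have hle := cnt_le_gam hbal i v
      have hge := gam_le x a i v
      exact ⟨i, hiN, by omega⟩
    · refine ⟨gam x a v, Or.inl ⟨rfl, hu⟩, ?_⟩
      intro N
      obtain ⟨i, hiN, hi⟩ := hno N (gam x a v + 1)
      have hle := cnt_le_gam hbal i v
      have hge := gam_le x a i v
      exact ⟨i, hiN, by omega⟩
  obtain ⟨W', hWcase, hstep⟩ := hwrong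
  -- build a strictly increasing sequence of wrong windows
  set g : ℕ → ℤ := fun t =>
    Nat.rec (Classical.choose (hstep 0)) (fun _ prev => Classical.choose (hstep (prev + 1))) t
    with hgdef
  have hg0 : 0 ≤ g 0 ∧ cnt x a (g 0) v = W' := Classical.choose_spec (hstep 0)
  have hgsucc : ∀ t : ℕ, g t + 1 ≤ g (t + 1) ∧ cnt x a (g (t + 1)) v = W' := by
    intro t
    exact Classical.choose_spec (hstep (g t + 1))
  have hgW : ∀ t : ℕ, cnt x a (g t) v = W' := by
    intro t
    cases t with
    | zero => exact hg0.2
    | succ t => exact (hgsucc t).2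
  have hgmono : ∀ s t : ℕ, s < t → g s < g t := by
    intro s t hst
    induction t with
    | zero => omega
    | succ t ih =>
      have h1 := (hgsucc t).1
      rcases Nat.lt_or_ge s t with h | h
      · have := ih h; omega
      · have : s = t := by omega
        subst this; omega
  -- pigeonhole: two wrong windows in the same residue class mod v
  have hvz : (0 : ℤ) < (v : ℤ) := by exact_mod_cast hv
  have hmapsto : ∀ t ∈ Finset.range (v + 1),
      ((g t) % (v : ℤ)).toNat ∈ Finset.range v := by
    intro t _
    have h1 : 0 ≤ (g t) % (v : ℤ) := Int.emod_nonneg _ (by omega)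
    have h2 : (g t) % (v : ℤ) < (v : ℤ) := Int.emod_lt_of_pos _ hvz
    rw [Finset.mem_range]
    omega
  have hcards : (Finset.range v).card < (Finset.range (v + 1)).card := by
    simp
  obtain ⟨t1, -, t2, -, hne, heqm0⟩ :=
    Finset.exists_ne_map_eq_of_card_lt_of_maps_to hcards hmapsto
  have heqm : ((g t1) % (v : ℤ)).toNat = ((g t2) % (v : ℤ)).toNat := heqm0
  obtain ⟨i, i', hii', hmod, hWi, hWi'⟩ : ∃ i i' : ℤ, i < i' ∧
      i % (v : ℤ) = i' % (v : ℤ) ∧ cnt x a i v = W' ∧ cnt x a i' v = W' := by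
    have hmods : (g t1) % (v : ℤ) = (g t2) % (v : ℤ) := by
      have h1 : 0 ≤ (g t1) % (v : ℤ) := Int.emod_nonneg _ (by omega)
      have h2 : 0 ≤ (g t2) % (v : ℤ) := Int.emod_nonneg _ (by omega)
      omega
    rcases lt_or_gt_of_ne hne with h | h
    · exact ⟨g t1, g t2, hgmono _ _ h, hmods, hgW t1, hgW t2⟩
    · exact ⟨g t2, g t1, hgmono _ _ h, hmods.symm, hgW t2, hgW t1⟩
  -- i' = i + (K' + 2 - 1) * v  (at least one block apart)
  have hdvd : (v : ℤ) ∣ (i' - i) := by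
    have h5 := Int.sub_emod i' i (v : ℤ)
    rw [← hmod, sub_self, Int.zero_emod] at h5
    exact Int.dvd_of_emod_eq_zero h5
  obtain ⟨c, hc⟩ := hdvd
  have hc1 : 1 ≤ c := by
    rcases le_or_gt c 0 with h | h
    · nlinarith
    · omega
  obtain ⟨K', hK'⟩ : ∃ K' : ℕ, c = (K' : ℤ) + 1 := ⟨(c - 1).toNat, by omega⟩
  -- the big window [i, i' + v) has length (K' + 2) * v
  have hiK : i + (((K' + 1) * v : ℕ) : ℤ) = i' := by
    rw [hK'] at hc
    push_cast
    linear_combination -hc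
  have hsum1 : cnt x a i ((K' + 2) * v)
      = cnt x a i v + cnt x a (i + (v : ℕ)) ((K' * v)) + cnt x a i' v := by
    have e1 : (K' + 2) * v = v + (K' * v + v) := by ring
    rw [e1, cnt_add, cnt_add]
    have e2 : i + (v : ℕ) + ((K' * v : ℕ) : ℤ) = i' := by
      rw [← hiK]; push_cast; ring
    rw [e2, add_assoc]
  -- bounds from bet
  set M : ℕ := (K' + 2) * v with hMdef
  have hM1 : 1 ≤ M := by rw [hMdef]; exact Nat.mul_pos (by omega) hv
  have hMcast : ((M : ℕ) : ℝ) = ((K' : ℝ) + 2) * (v : ℝ) := by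
    rw [hMdef]; push_cast; ring
  have hgamM_le : (gam x a M : ℤ) ≤ ((K' : ℤ) + 2) * u := by
    have h1 := betB1 (x := x) (a := a) M hM1
    rw [hMcast] at h1
    have h2 : ((K' : ℝ) + 2) * ((v : ℝ) * bet x a) = ((K' : ℝ) + 2) * (u : ℝ) := by
      rw [hvb]
    have h3 : (gam x a M : ℝ) ≤ ((K' : ℝ) + 2) * (u : ℝ) := by
      calc (gam x a M : ℝ) ≤ ((K' : ℝ) + 2) * (v : ℝ) * bet x a := h1
        _ = ((K' : ℝ) + 2) * ((v : ℝ) * bet x a) := by ring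
        _ = ((K' : ℝ) + 2) * (u : ℝ) := h2
    exact_mod_cast h3
  have hgamM_ge : ((K' : ℤ) + 2) * u - 1 ≤ (gam x a M : ℤ) := by
    have h1 := betB2 hbal M hM1
    rw [hMcast] at h1
    have h3 : ((K' : ℝ) + 2) * (u : ℝ) ≤ (gam x a M : ℝ) + 1 := by
      calc ((K' : ℝ) + 2) * (u : ℝ) = ((K' : ℝ) + 2) * ((v : ℝ) * bet x a) := by rw [hvb]
        _ = ((K' : ℝ) + 2) * (v : ℝ) * bet x a := by ring
        _ ≤ (gam x a M : ℝ) + 1 := h1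
    have h4 : ((K' : ℤ) + 2) * u ≤ (gam x a M : ℤ) + 1 := by exact_mod_cast h3
    omega
  have hcnt_le : (cnt x a i M : ℤ) ≤ (gam x a M : ℤ) + 1 := by
    exact_mod_cast cnt_le_gam hbal i M
  have hcnt_ge : (gam x a M : ℤ) ≤ (cnt x a i M : ℤ) := by
    exact_mod_cast gam_le x a i M
  -- middle blocks
  have hmid_ge := cnt_blocks_ge (x := x) (a := a) v K' (i + (v : ℕ))
  have hmid_le := cnt_blocks_le hbal v K' (i + (v : ℕ))
  rcases hWcase with ⟨hW'val, huval⟩ | ⟨hW'val, huval⟩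
  · -- light case : W' = gam v, u = gam v + 1
    -- upper bound on the big count
    have hup : (cnt x a i M : ℤ) ≤ ((K' : ℤ) + 2) * u - 2 := by
      have e1 : cnt x a i M ≤ W' + K' * (gam x a v + 1) + W' := by
        rw [hMdef, hsum1, hWi, hWi']
        omega
      have e2 : ((W' : ℤ) + (K' : ℤ) * ((gam x a v : ℤ) + 1) + W')
          = ((K' : ℤ) + 2) * u - 2 := by
        rw [hW'val, huval]
        push_cast
        ring
      have e3 : (cnt x a i M : ℤ) ≤ (W' : ℤ) + (K' : ℤ) * ((gam x a v : ℤ) + 1) + W' := by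
        exact_mod_cast e1
      omega
    omega
  · -- heavy case : W' = gam v + 1, u = gam v
    have hlow : ((K' : ℤ) + 2) * u + 2 ≤ (cnt x a i M : ℤ) := by
      have e1 : W' + K' * gam x a v + W' ≤ cnt x a i M := by
        rw [hMdef, hsum1, hWi, hWi']
        omega
      have e2 : ((W' : ℤ) + (K' : ℤ) * (gam x a v : ℤ) + W')
          = ((K' : ℤ) + 2) * u + 2 := by
        rw [hW'val, huval]
        push_cast
        ring
      have e3 : ((W' : ℤ) + (K' : ℤ) * (gam x a v : ℤ) + W') ≤ (cnt x a i M : ℤ) := by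
        exact_mod_cast e1
      omega
    omega

lemma bet_irrational (hcard : ∀ n : ℕ, (Fac x n).card = n + 1)
    (hUR : UniformlyRecurrent x) (hab : a ≠ b) (h2 : ∀ i : ℤ, x i = a ∨ x i = b)
    (hbal : ∀ (m : ℕ) (i j : ℤ), cnt x a i m ≤ cnt x a j m + 1)
    (u : ℤ) (v : ℕ) (hv : 1 ≤ v) : (v : ℝ) * bet x a ≠ (u : ℝ) := by
  intro hvb
  obtain ⟨N, W, hNall⟩ := eventually_const_cnt hbal hv hvb
  refine tail_periodic_false hcard hUR hv (N := N) ?_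
  intro i hi
  have e1 : cnt x a i (v + 1) = cnt x a i v + if x (i + (v : ℕ)) = a then 1 else 0 :=
    cnt_succ x a i v
  have e2 : cnt x a i (v + 1) = (if x i = a then 1 else 0) + cnt x a (i + 1) v :=
    cnt_cons x a i v
  have hv1 := hNall i hi
  have hv2 := hNall (i + 1) (by omega)
  rcases h2 i with hxi | hxi <;> rcases h2 (i + (v : ℕ)) with hxv | hxv
  · rw [hxv, hxi]
  · exfalso
    rw [if_pos hxi] at e2
    rw [if_neg (by rw [hxv]; exact fun h => hab h.symm)] at e1
    omega
  · exfalso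
    rw [if_neg (by rw [hxi]; exact fun h => hab h.symm)] at e2
    rw [if_pos hxv] at e1
    omega
  · rw [hxv, hxi]

end StAux
end Chunk7
section Chunk8
set_option linter.unusedSectionVars false
set_option maxHeartbeats 2000000

open Finset

namespace StAux

variable {A : Type*} [Fintype A] {x : ℤ → A} {a : A}

attribute [local instance] Classical.propDecidable

lemma lfun_bound (hbal : ∀ (m : ℕ) (i j : ℤ), cnt x a i m ≤ cnt x a j m + 1) :
    ∀ i j : ℤ, (cfun x a i : ℝ) - i * bet x a ≤ (cfun x a j : ℝ) - j * bet x a + 1 := by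
  intro i j
  rcases lt_trichotomy i j with h | h | h
  · set m : ℕ := (j - i).toNat with hm
    have hm1 : 1 ≤ m := by omega
    have h1 : cfun x a j = cfun x a i + (cnt x a i m : ℤ) := by
      have h0 := cfun_cnt x a i m
      rw [show i + ((m : ℕ) : ℤ) = j by omega] at h0
      exact h0
    have h3 : (gam x a m : ℕ) ≤ cnt x a i m := gam_le x a i m
    have h4 := betB2 hbal m hm1
    have h5 : (m : ℝ) * bet x a ≤ (cnt x a i m : ℝ) + 1 := by
      have h6 : (gam x a m : ℝ) ≤ (cnt x a i m : ℝ) := by exact_mod_cast h3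
      linarith
    have hjr : (j : ℝ) = (i : ℝ) + (m : ℝ) := by exact_mod_cast (show j = i + ((m : ℕ) : ℤ) by omega)
    have h6 : (j : ℝ) * bet x a = (i : ℝ) * bet x a + (m : ℝ) * bet x a := by rw [hjr]; ring
    rw [h1]
    push_cast
    linarith
  · rw [h]; linarith
  · set m : ℕ := (i - j).toNat with hm
    have hm1 : 1 ≤ m := by omega
    have h1 : cfun x a i = cfun x a j + (cnt x a j m : ℤ) := by
      have h0 := cfun_cnt x a j m
      rw [show j + ((m : ℕ) : ℤ) = i by omega] at h0
      exact h0
    have h3 : cnt x a j m ≤ gam x a m + 1 := cnt_le_gam hbal j m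
    have h4 := betB1 (x := x) (a := a) m hm1
    have h5 : (cnt x a j m : ℝ) ≤ (m : ℝ) * bet x a + 1 := by
      have h6 : (cnt x a j m : ℝ) ≤ (gam x a m : ℝ) + 1 := by exact_mod_cast h3
      linarith
    have hir : (i : ℝ) = (j : ℝ) + (m : ℝ) := by exact_mod_cast (show i = j + ((m : ℕ) : ℤ) by omega)
    have h6 : (i : ℝ) * bet x a = (j : ℝ) * bet x a + (m : ℝ) * bet x a := by rw [hir]; ring
    rw [h1]
    push_cast
    linarith

end StAux
end Chunk8

open StAux in
/-- A sturmian sequence admits no constant arithmetic subsequence. -/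
theorem sturmian_no_constant_arithmetic_subsequence
    {A : Type*} [Fintype A] (x : ℤ → A) (hx : IsSturmian x) :
    ¬ ∃ (p : ℕ) (k : ℤ) (a : A), 1 ≤ p ∧ ∀ n : ℤ, x (k + n * p) = a := by
  classical
  obtain ⟨hUR, hcompl⟩ := hx
  rintro ⟨p, k, a, hp, hap⟩
  have hcard : ∀ n : ℕ, (Fac x n).card = n + 1 := card_Fac x hcompl
  have hxk : x k = a := by simpa using hap 0
  -- find the second letter b
  have hcard1 : (Fac x 1).card = 2 := hcard 1
  obtain ⟨y, hy, hyne⟩ := Finset.exists_mem_ne (s := Fac x 1) (by omega) (win x 1 k)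
  obtain ⟨r, hr⟩ := mem_Fac_iff.1 hy
  set b := x r with hbdef
  have hab : a ≠ b := by
    intro h
    apply hyne
    rw [← hr]
    funext t
    have ht0 : (t : ℕ) = 0 := Nat.lt_one_iff.1 t.2
    show x (r + ((t : ℕ) : ℤ)) = x (k + ((t : ℕ) : ℤ))
    rw [ht0]
    push_cast
    rw [add_zero, add_zero, hxk, ← hbdef, ← h]
  have hwkr : win x 1 k ≠ win x 1 r := by
    intro h
    have h0 := congrFun h ⟨0, by omega⟩
    have e1 : win x 1 k ⟨0, by omega⟩ = x k := by
      show x (k + ((0 : ℕ) : ℤ)) = x k; push_cast; rw [add_zero]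
    have e2 : win x 1 r ⟨0, by omega⟩ = x r := by
      show x (r + ((0 : ℕ) : ℤ)) = x r; push_cast; rw [add_zero]
    rw [e1, e2, hxk, ← hbdef] at h0
    exact hab h0
  have h2 : ∀ i : ℤ, x i = a ∨ x i = b := by
    intro i
    have hsub : ({win x 1 k, win x 1 r} : Finset (Fin 1 → A)) ⊆ Fac x 1 := by
      intro z hz
      rcases Finset.mem_insert.1 hz with h | h
      · rw [h]; exact win_mem_Fac x 1 k
      · rw [Finset.mem_singleton.1 h]; exact win_mem_Fac x 1 r
    have hcard2 : ({win x 1 k, win x 1 r} : Finset (Fin 1 → A)).card = 2 := by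
      rw [Finset.card_insert_of_notMem (by simpa using hwkr), Finset.card_singleton]
    have heq : ({win x 1 k, win x 1 r} : Finset (Fin 1 → A)) = Fac x 1 :=
      Finset.eq_of_subset_of_card_le hsub (by omega)
    have hmemi : win x 1 i ∈ ({win x 1 k, win x 1 r} : Finset (Fin 1 → A)) := by
      rw [heq]; exact win_mem_Fac x 1 i
    rcases Finset.mem_insert.1 hmemi with h | h
    · left
      have h0 := congrFun h ⟨0, by omega⟩
      have e1 : win x 1 i ⟨0, by omega⟩ = x i := by
        show x (i + ((0 : ℕ) : ℤ)) = x i; push_cast; rw [add_zero]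
      have e2 : win x 1 k ⟨0, by omega⟩ = x k := by
        show x (k + ((0 : ℕ) : ℤ)) = x k; push_cast; rw [add_zero]
      rw [e1, e2, hxk] at h0
      exact h0
    · right
      have h := Finset.mem_singleton.1 h
      have h0 := congrFun h ⟨0, by omega⟩
      have e1 : win x 1 i ⟨0, by omega⟩ = x i := by
        show x (i + ((0 : ℕ) : ℤ)) = x i; push_cast; rw [add_zero]
      have e2 : win x 1 r ⟨0, by omega⟩ = x r := by
        show x (r + ((0 : ℕ) : ℤ)) = x r; push_cast; rw [add_zero]
      rw [e1, e2, ← hbdef] at h0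
      exact h0
  have hbal := balanced hcard hUR hab h2
  have hirr : ∀ (u : ℤ) (v : ℕ), 1 ≤ v → (v : ℝ) * bet x a ≠ (u : ℝ) := fun u v hv =>
    bet_irrational hcard hUR hab h2 hbal u v hv
  have hβ1 : bet x a ≤ 1 := bet_le_one
  have hβlt1 : bet x a < 1 := by
    rcases lt_or_eq_of_le hβ1 with h | h
    · exact h
    · exfalso
      apply hirr 1 1 le_rfl
      rw [h]
      norm_num
  -- the sup function φ
  have hbdd : BddAbove (Set.range fun i : ℤ => (cfun x a i : ℝ) - i * bet x a) := by
    refine ⟨(cfun x a 0 : ℝ) - (0 : ℤ) * bet x a + 1, ?_⟩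
    rintro y ⟨i, rfl⟩
    exact lfun_bound hbal i 0
  set φ := sSup (Set.range fun i : ℤ => (cfun x a i : ℝ) - i * bet x a) with hφ
  have hφ_lb : ∀ jz : ℤ, (cfun x a jz : ℝ) - jz * bet x a ≤ φ := fun jz =>
    le_csSup hbdd ⟨jz, rfl⟩
  have hφ_ub : ∀ jz : ℤ, φ ≤ (cfun x a jz : ℝ) - jz * bet x a + 1 := by
    intro jz
    refine csSup_le ⟨_, ⟨0, rfl⟩⟩ ?_
    rintro y ⟨i, rfl⟩
    exact lfun_bound hbal i jz
  have hθ : ∀ jz : ℤ, 0 ≤ (jz : ℝ) * bet x a + φ - (cfun x a jz : ℝ) ∧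
      (jz : ℝ) * bet x a + φ - (cfun x a jz : ℝ) ≤ 1 := by
    intro jz
    constructor
    · have := hφ_lb jz; linarith
    · have := hφ_ub jz; linarith
  have hapos : ∀ jz : ℤ, x jz = a →
      1 - bet x a ≤ (jz : ℝ) * bet x a + φ - (cfun x a jz : ℝ) := by
    intro jz hja
    have h1 := (hθ (jz + 1)).1
    have hc : cfun x a (jz + 1) = cfun x a jz + 1 := by
      rw [cfun_succ, if_pos hja]
    rw [hc] at h1
    push_cast at h1 ⊢
    linarith
  -- the subgroup Z + Z p β
  let G : AddSubgroup ℝ :=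
    { carrier := {t : ℝ | ∃ mz nz : ℤ, t = (mz : ℝ) + (nz : ℝ) * ((p : ℝ) * bet x a)}
      zero_mem' := ⟨0, 0, by push_cast; ring⟩
      add_mem' := by
        rintro s t ⟨m1, n1, rfl⟩ ⟨m2, n2, rfl⟩
        exact ⟨m1 + m2, n1 + n2, by push_cast; ring⟩
      neg_mem' := by
        rintro s ⟨m1, n1, rfl⟩
        exact ⟨-m1, -n1, by push_cast; ring⟩ }
  rcases AddSubgroup.dense_or_cyclic G with hdense | ⟨g, hcyc⟩
  · -- dense case : find n with x (k + n p) = b, contradiction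
    have hIoo : (Set.Ioo (-((k : ℝ) * bet x a + φ - (cfun x a k : ℝ)))
        (1 - bet x a - ((k : ℝ) * bet x a + φ - (cfun x a k : ℝ)))).Nonempty := by
      rw [Set.nonempty_Ioo]
      linarith [hβlt1]
    obtain ⟨y, hyG, hyI⟩ := hdense.exists_mem_open isOpen_Ioo hIoo
    obtain ⟨M, nn, rfl⟩ := hyG
    have hja : x (k + nn * (p : ℤ)) = a := hap nn
    have hθj1 := hapos (k + nn * (p : ℤ)) hja
    have hθj2 := (hθ (k + nn * (p : ℤ))).2
    set D : ℤ := cfun x a k - cfun x a (k + nn * (p : ℤ)) - M with hD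
    have hDval : (D : ℝ) = ((k + nn * (p : ℤ) : ℤ) : ℝ) * bet x a + φ
        - (cfun x a (k + nn * (p : ℤ)) : ℝ)
        - (((k : ℝ) * bet x a + φ - (cfun x a k : ℝ)) + ((M : ℝ) + (nn : ℝ) * ((p : ℝ) * bet x a))) := by
      rw [hD]
      push_cast
      ring
    have hy1 := hyI.1
    have hy2 := hyI.2
    have hpos : (0 : ℝ) < (D : ℝ) := by rw [hDval]; linarith
    have hlt1 : (D : ℝ) < 1 := by rw [hDval]; linarith
    have hposz : (0 : ℤ) < D := by exact_mod_cast hpos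
    have hlt1z : D < 1 := by exact_mod_cast hlt1
    omega
  · -- cyclic case : β would be rational
    have h1G : (1 : ℝ) ∈ G := ⟨1, 0, by push_cast; ring⟩
    have hpG : ((p : ℝ) * bet x a) ∈ G := ⟨0, 1, by push_cast; ring⟩
    rw [hcyc, AddSubgroup.mem_closure_singleton] at h1G hpG
    obtain ⟨z1, hz1⟩ := h1G
    obtain ⟨z2, hz2⟩ := hpG
    rw [zsmul_eq_mul] at hz1 hz2
    have hz1ne : z1 ≠ 0 := by
      rintro rfl
      rw [Int.cast_zero, zero_mul] at hz1
      exact one_ne_zero hz1.symm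
    have hkey : ((z1 * (p : ℤ) : ℤ) : ℝ) * bet x a = ((z2 : ℤ) : ℝ) := by
      have e1 : (z1 : ℝ) * ((p : ℝ) * bet x a) = (z1 : ℝ) * ((z2 : ℝ) * g) := by rw [hz2]
      have e2 : (z1 : ℝ) * ((z2 : ℝ) * g) = (z2 : ℝ) * ((z1 : ℝ) * g) := by ring
      rw [hz1, mul_one] at e2
      push_cast
      calc (z1 : ℝ) * (p : ℝ) * bet x a = (z1 : ℝ) * ((p : ℝ) * bet x a) := by ring
        _ = (z2 : ℝ) := by rw [e1, e2]
    have hpz : (0 : ℤ) < (p : ℤ) := by exact_mod_cast hp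
    rcases lt_trichotomy (z1 * (p : ℤ)) 0 with h | h | h
    · apply hirr (-z2) ((-(z1 * (p : ℤ))).toNat) (by omega)
      have hcast : (((-(z1 * (p : ℤ))).toNat : ℕ) : ℝ) = -((z1 * (p : ℤ) : ℤ) : ℝ) := by
        have : (((-(z1 * (p : ℤ))).toNat : ℕ) : ℤ) = -(z1 * (p : ℤ)) := by omega
        exact_mod_cast this
      rw [hcast]
      push_cast
      push_cast at hkey
      linarith [hkey]
    · exact absurd h (mul_ne_zero hz1ne (by omega))
    · apply hirr z2 ((z1 * (p : ℤ)).toNat) (by omega)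
      have hcast : (((z1 * (p : ℤ)).toNat : ℕ) : ℝ) = ((z1 * (p : ℤ) : ℤ) : ℝ) := by
        have : (((z1 * (p : ℤ)).toNat : ℕ) : ℤ) = z1 * (p : ℤ) := by omega
        exact_mod_cast this
      rw [hcast]
      exact hkey
end

section
/- Let d ≥ 1, let M be a d×d matrix with integer entries, and let p be a prime. Let 𝟙 = (1,…,1) ∈ ℤ^d be the row vector of ones. The following are equivalent: (1) there exists m ∈ ℕ such that every entry of the row vector 𝟙M^m is divisible by p; (2) every entry of 𝟙M^d is divisible by p. -/
/-- Let `M` be a `d × d` integer matrix, `p` a prime and `𝟙 = (1,…,1)` the row vector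
of ones. Then `𝟙 M^m ∈ pℤ^d` for some `m` iff `𝟙 M^d ∈ pℤ^d`. -/
theorem ones_vecMul_pow_dvd_iff
    {d : ℕ} (hd : 1 ≤ d) (M : Matrix (Fin d) (Fin d) ℤ) (p : ℕ) (hp : p.Prime) :
    (∃ m : ℕ, ∀ j : Fin d, (p : ℤ) ∣ Matrix.vecMul 1 (M ^ m) j) ↔
      (∀ j : Fin d, (p : ℤ) ∣ Matrix.vecMul 1 (M ^ d) j) := by
  haveI : Fact p.Prime := ⟨hp⟩
  set M' : Matrix (Fin d) (Fin d) (ZMod p) := M.map (Int.castRingHom (ZMod p)) with hM'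
  set f : Module.End (ZMod p) (Fin d → ZMod p) := M'.vecMulLinear with hf
  have hpow : ∀ m : ℕ, (f ^ m) 1 = Matrix.vecMul 1 (M' ^ m) := by
    intro m
    induction m with
    | zero => simp
    | succ n ih =>
      rw [pow_succ', Module.End.mul_apply, ih, hf, Matrix.vecMulLinear_apply,
        Matrix.vecMul_vecMul]
      rw [← pow_succ]
  have hcast : ∀ m : ℕ, (∀ j : Fin d, (p : ℤ) ∣ Matrix.vecMul 1 (M ^ m) j) ↔
      (f ^ m) 1 = 0 := by
    intro m
    rw [hpow m]
    have hmap : M' ^ m = (M ^ m).map (Int.castRingHom (ZMod p)) := by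
      rw [hM', ← RingHom.mapMatrix_apply, ← RingHom.mapMatrix_apply, map_pow]
    have key : ∀ j : Fin d, Matrix.vecMul 1 (M' ^ m) j
        = ((Matrix.vecMul 1 (M ^ m) j : ℤ) : ZMod p) := by
      intro j
      rw [hmap]
      have h1 := RingHom.map_vecMul (Int.castRingHom (ZMod p)) (M ^ m) 1 j
      have hone : ((Int.castRingHom (ZMod p)) ∘ (1 : Fin d → ℤ)) = (1 : Fin d → ZMod p) := by
        funext i; simp
      rw [hone] at h1
      rw [← h1]
      simp [Int.coe_castRingHom]
    constructor
    · intro h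
      funext j
      rw [key j]
      simp only [Pi.zero_apply]
      exact (ZMod.intCast_zmod_eq_zero_iff_dvd _ _).mpr (h j)
    · intro h j
      rw [← ZMod.intCast_zmod_eq_zero_iff_dvd, ← key j, h]
      simp
  simp only [hcast]
  constructor
  · rintro ⟨m, hm⟩
    have hker : (1 : Fin d → ZMod p) ∈ LinearMap.ker (f ^ m) := hm
    have := Module.End.ker_pow_le_ker_pow_finrank f m hker
    rwa [Module.finrank_fintype_fun_eq_card, Fintype.card_fin, LinearMap.mem_ker] at this
  · intro h
    exact ⟨d, h⟩
end

section
/- Let M be a d×d integer matrix and p a prime. (i) If there exist n ∈ ℕ and i ∈ ℕ such that for every j with i ≤ j ≤ i+d the vector 𝟙M^j belongs to p^nℤ^d but does not belong to p^{n+1}ℤ^d, then for all j ≥ i the vector 𝟙M^j does not belong to p^{n+1}ℤ^d. (ii) As a consequence, if there exist integers n and k with 𝟙M^k ∈ p^nℤ^d, then 𝟙M^{nd} ∈ p^nℤ^d. -/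
open Matrix

lemma zmod_vec_stab {d p : ℕ} [Fact p.Prime] (A : Matrix (Fin d) (Fin d) (ZMod p))
    (x : Fin d → ZMod p) (hA : ∀ m ≤ d, Matrix.vecMul x (A ^ m) ≠ 0) :
    ∀ m : ℕ, Matrix.vecMul x (A ^ m) ≠ 0 := by
  have hpow : ∀ (m : ℕ) (y : Fin d → ZMod p),
      ((A.vecMulLinear ^ m) y) = Matrix.vecMul y (A ^ m) := by
    intro m
    induction m with
    | zero => intro y; simp [Matrix.vecMul_one]
    | succ m ih =>
        intro y
        rw [pow_succ, Module.End.mul_apply, Matrix.vecMulLinear_apply, ih, pow_succ',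
          ← Matrix.vecMul_vecMul]
  intro m hm
  rcases le_or_gt m d with h | h
  · exact hA m h hm
  · have hker : x ∈ LinearMap.ker (A.vecMulLinear ^ m) := by
      rw [LinearMap.mem_ker, hpow, hm]
    have hrank : Module.finrank (ZMod p) (Fin d → ZMod p) = d := Module.finrank_fin_fun _
    have heq := Module.End.ker_pow_eq_ker_pow_finrank_of_le (f := A.vecMulLinear)
      (m := m) (by rw [hrank]; exact h.le)
    rw [heq, LinearMap.mem_ker, hrank, hpow] at hker
    exact hA d le_rfl hker

lemma part_one {d : ℕ} (M : Matrix (Fin d) (Fin d) ℤ) {p : ℕ} (hp : p.Prime)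
    (n i : ℕ)
    (h : ∀ j : ℕ, i ≤ j → j ≤ i + d →
        (∀ t : Fin d, (p : ℤ) ^ n ∣ Matrix.vecMul 1 (M ^ j) t) ∧
        ¬ (∀ t : Fin d, (p : ℤ) ^ (n + 1) ∣ Matrix.vecMul 1 (M ^ j) t)) :
    ∀ j : ℕ, i ≤ j → ¬ (∀ t : Fin d, (p : ℤ) ^ (n + 1) ∣ Matrix.vecMul 1 (M ^ j) t) := by
  haveI : Fact p.Prime := ⟨hp⟩
  have hp0 : ((p : ℤ) ^ n) ≠ 0 := pow_ne_zero _ (by exact_mod_cast hp.ne_zero)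
  -- extract w with v i = p^n • w
  have hdvd := (h i le_rfl (Nat.le_add_right _ _)).1
  set w : Fin d → ℤ := fun t => Matrix.vecMul 1 (M ^ i) t / (p : ℤ) ^ n with hw
  have hwdef : ∀ t, Matrix.vecMul 1 (M ^ i) t = (p : ℤ) ^ n * w t := fun t =>
    (Int.mul_ediv_cancel' (hdvd t)).symm
  -- v (i + m) t = p^n * (w ᵥ* M^m) t
  have hvi : Matrix.vecMul 1 (M ^ i) = ((p : ℤ) ^ n) • w := funext hwdef
  have hsplit : ∀ (m : ℕ) (t : Fin d),
      Matrix.vecMul 1 (M ^ (i + m)) t = (p : ℤ) ^ n * Matrix.vecMul w (M ^ m) t := by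
    intro m t
    rw [pow_add, ← Matrix.vecMul_vecMul, hvi, Matrix.smul_vecMul]
    simp
  -- divisibility criterion
  have hcrit : ∀ (m : ℕ) (t : Fin d),
      ((p : ℤ) ^ (n + 1) ∣ Matrix.vecMul 1 (M ^ (i + m)) t) ↔
        (p : ℤ) ∣ Matrix.vecMul w (M ^ m) t := by
    intro m t
    rw [hsplit, pow_succ, mul_dvd_mul_iff_left hp0]
  -- pass to ZMod p
  set A : Matrix (Fin d) (Fin d) (ZMod p) := (Int.castRingHom (ZMod p)).mapMatrix M with hA
  set x : Fin d → ZMod p := fun t => ((w t : ℤ) : ZMod p) with hx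
  have hcast : ∀ (m : ℕ) (t : Fin d),
      ((Matrix.vecMul w (M ^ m) t : ℤ) : ZMod p) = Matrix.vecMul x (A ^ m) t := by
    intro m t
    have hAm : A ^ m = (Int.castRingHom (ZMod p)).mapMatrix (M ^ m) := (map_pow _ M m).symm
    rw [hAm]
    simp only [Matrix.vecMul, dotProduct, RingHom.mapMatrix_apply, Matrix.map_apply,
      hx, Int.coe_castRingHom]
    push_cast
    rfl
  have hiff : ∀ (m : ℕ),
      (¬ ∀ t : Fin d, (p : ℤ) ^ (n + 1) ∣ Matrix.vecMul 1 (M ^ (i + m)) t) ↔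
        Matrix.vecMul x (A ^ m) ≠ 0 := by
    intro m
    constructor
    · intro hne h0
      apply hne
      intro t
      rw [hcrit]
      rw [← ZMod.intCast_zmod_eq_zero_iff_dvd, hcast, h0]
      rfl
    · intro hne hall
      apply hne
      funext t
      have := (hcrit m t).mp (hall t)
      rw [← ZMod.intCast_zmod_eq_zero_iff_dvd, hcast] at this
      exact this
  have hwin : ∀ m ≤ d, Matrix.vecMul x (A ^ m) ≠ 0 := by
    intro m hm
    exact (hiff m).mp (h (i + m) (Nat.le_add_right _ _) (by omega)).2
  intro j hj
  obtain ⟨m, rfl⟩ := Nat.exists_eq_add_of_le hj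
  exact (hiff m).mpr (zmod_vec_stab A x hwin m)

/-- Let `M` be a `d × d` integer matrix and `p` a prime.
(i) If for some `n` and `i` each of `𝟙M^i, …, 𝟙M^{i+d}` lies in `p^nℤ^d` but not in
`p^{n+1}ℤ^d`, then `𝟙M^j ∉ p^{n+1}ℤ^d` for all `j ≥ i`.
(ii) Consequently, if `𝟙M^k ∈ p^nℤ^d` for some `n, k`, then `𝟙M^{nd} ∈ p^nℤ^d`. -/
theorem ones_vecMul_power_stability
    {d : ℕ} (hd : 1 ≤ d) (M : Matrix (Fin d) (Fin d) ℤ) (p : ℕ) (hp : p.Prime) :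
    (∀ n i : ℕ,
      (∀ j : ℕ, i ≤ j → j ≤ i + d →
        (∀ t : Fin d, (p : ℤ) ^ n ∣ Matrix.vecMul 1 (M ^ j) t) ∧
        ¬ (∀ t : Fin d, (p : ℤ) ^ (n + 1) ∣ Matrix.vecMul 1 (M ^ j) t)) →
      ∀ j : ℕ, i ≤ j →
        ¬ (∀ t : Fin d, (p : ℤ) ^ (n + 1) ∣ Matrix.vecMul 1 (M ^ j) t)) ∧
    (∀ n k : ℕ, (∀ t : Fin d, (p : ℤ) ^ n ∣ Matrix.vecMul 1 (M ^ k) t) →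
      ∀ t : Fin d, (p : ℤ) ^ n ∣ Matrix.vecMul 1 (M ^ (n * d)) t) := by
  -- D e j : p^e divides every entry of 𝟙 M^j
  have mono : ∀ (e j : ℕ), (∀ t : Fin d, (p : ℤ) ^ e ∣ Matrix.vecMul 1 (M ^ j) t) →
      ∀ t : Fin d, (p : ℤ) ^ e ∣ Matrix.vecMul 1 (M ^ (j + 1)) t := by
    intro e j hD t
    rw [pow_succ, ← Matrix.vecMul_vecMul]
    simp only [Matrix.vecMul, dotProduct]
    exact Finset.dvd_sum fun s _ => Dvd.dvd.mul_right (hD s) _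
  have mono' : ∀ (e j j' : ℕ), j ≤ j' →
      (∀ t : Fin d, (p : ℤ) ^ e ∣ Matrix.vecMul 1 (M ^ j) t) →
      ∀ t : Fin d, (p : ℤ) ^ e ∣ Matrix.vecMul 1 (M ^ j') t := by
    intro e j j' hle
    induction j' with
    | zero => intro hD; have hj : j = 0 := by omega
              subst hj; exact hD
    | succ j' ih =>
        intro hD
        rcases Nat.lt_or_ge j (j' + 1) with h | h
        · exact mono e j' (ih (by omega) hD)
        · have : j = j' + 1 := by omega
          subst this; exact hD
  refine ⟨fun n i h => part_one M hp n i h, ?_⟩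
  intro n k hk
  -- claim: ∀ m ≤ n, D m (m * d)
  have claim : ∀ m ≤ n, ∀ t : Fin d, (p : ℤ) ^ m ∣ Matrix.vecMul 1 (M ^ (m * d)) t := by
    intro m
    induction m with
    | zero => intro _ t; simp
    | succ m ih =>
        intro hmn
        have Dm := ih (by omega)
        by_contra hnot
        push_neg at hnot
        have hwin : ∀ j : ℕ, m * d ≤ j → j ≤ m * d + d →
            (∀ t : Fin d, (p : ℤ) ^ m ∣ Matrix.vecMul 1 (M ^ j) t) ∧
            ¬ (∀ t : Fin d, (p : ℤ) ^ (m + 1) ∣ Matrix.vecMul 1 (M ^ j) t) := by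
          intro j h1 h2
          refine ⟨mono' m (m * d) j h1 Dm, fun hD => ?_⟩
          obtain ⟨t, hnd⟩ := hnot
          exact hnd (mono' (m + 1) j ((m + 1) * d) (by rw [Nat.succ_mul]; exact h2) hD t)
        have hconc := part_one M hp m (m * d) hwin
        -- contradiction with hk at index max k (m*d)
        have hDk : ∀ t : Fin d, (p : ℤ) ^ (m + 1) ∣ Matrix.vecMul 1 (M ^ (max k (m * d))) t := by
          intro t
          exact dvd_trans (pow_dvd_pow _ (by omega)) (mono' n k _ (le_max_left _ _) hk t)
        exact hconc (max k (m * d)) (le_max_right _ _) hDk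
  exact claim n le_rfl
end

section
/- Let σ be a primitive substitution of constant length l on a finite alphabet A, prolongable on b.a with admissible two-sided fixed point x = σ^∞(b.a), generating a non-periodic subshift, and let h = h(σ) be its height. For i ∈ ℤ set A_i = {x_{i+nh} : n ∈ ℤ} ⊆ A. Then the sets A_0, A_1, …, A_{h−1} are pairwise disjoint and their union is A (they form a partition of A). Moreover, for all i, j ∈ ℤ, A_i = A_j if and only if i ≡ j (mod h). -/
/-- Apply a morphism (given on letters) to a word by concatenation. -/
def substApply {A : Type*} (σ : A → List A) (w : List A) : List A := (w.map σ).flatten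

/-- The iterate `σ^n(a)` of a morphism on a letter. -/
def substIter {A : Type*} (σ : A → List A) : ℕ → A → List A
  | 0, a => [a]
  | n + 1, a => substApply σ (substIter σ n a)

/-- The incidence matrix of a morphism. -/
def incidenceMatrix {A : Type*} [Fintype A] [DecidableEq A] (σ : A → List A) :
    Matrix A A ℤ := fun i j => ((σ j).count i : ℤ)

/-- The `k`-th power of the shift: `(S^k x) n = x (n + k)`. -/
def shiftZ {A : Type*} (k : ℤ) (x : ℤ → A) : ℤ → A := fun n => x (n + k)

section aux
variable {A : Type*}

lemma getD_congr (L : List A) {r : ℕ} (hr : r < L.length) (d d' : A) :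
    L.getD r d = L.getD r d' := by
  rw [List.getD_eq_getElem _ _ hr, List.getD_eq_getElem _ _ hr]

lemma substApply_nil (σ : A → List A) : substApply σ [] = [] := rfl
lemma substApply_cons (σ : A → List A) (c : A) (w : List A) :
    substApply σ (c :: w) = σ c ++ substApply σ w := by
  simp [substApply]

lemma substApply_length (σ : A → List A) {l : ℕ} (hlen : ∀ c, (σ c).length = l)
    (w : List A) : (substApply σ w).length = l * w.length := by
  induction w with
  | nil => simp [substApply]
  | cons c w ih => simp [substApply_cons, ih, hlen, Nat.mul_succ]; ring

lemma substIter_length (σ : A → List A) {l : ℕ} (hlen : ∀ c, (σ c).length = l)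
    (t : ℕ) (c : A) : (substIter σ t c).length = l ^ t := by
  induction t with
  | zero => simp [substIter]
  | succ t ih => simp [substIter, substApply_length σ hlen, ih, pow_succ]; ring

lemma substApply_getD (σ : A → List A) {l : ℕ} (hlen : ∀ c, (σ c).length = l)
    (w : List A) (q r : ℕ) (hq : q < w.length) (hr : r < l) (d d' : A) :
    (substApply σ w).getD (l * q + r) d = (σ (w.getD q d')).getD r d := by
  induction w generalizing q with
  | nil => simp at hq
  | cons c w ih =>
    rw [substApply_cons]
    rcases q with _ | q
    · rw [List.getD_append _ _ _ _ (by simpa [hlen c] using hr)]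
      simp
    · rw [List.getD_append_right _ _ _ _ (by rw [hlen c, Nat.mul_succ]; omega)]
      have : l * (q + 1) + r - (σ c).length = l * q + r := by
        rw [hlen c, Nat.mul_succ]; omega
      rw [this]
      simpa using ih q (by simpa using hq)

variable [Fintype A] [DecidableEq A]

lemma count_substApply (σ : A → List A) (i : A) (w : List A) :
    (substApply σ w).count i = ∑ c : A, (σ c).count i * w.count c := by
  induction w with
  | nil => simp [substApply]
  | cons c w ih =>
    rw [substApply_cons, List.count_append, ih]
    have : ∀ c' : A, (c :: w).count c' = w.count c' + if c = c' then 1 else 0 := by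
      intro c'; simp [List.count_cons]
    simp only [this, Nat.mul_add, Finset.sum_add_distrib]
    rw [add_comm]
    congr 1
    simp [Finset.sum_ite_eq, mul_comm]

lemma incidence_pow (σ : A → List A) (k : ℕ) (i j : A) :
    ((incidenceMatrix σ) ^ k) i j = ((substIter σ k j).count i : ℤ) := by
  induction k generalizing i j with
  | zero =>
    rcases eq_or_ne i j with rfl | hne
    · simp [substIter, Matrix.one_apply]
    · simp [substIter, Matrix.one_apply, hne, Ne.symm hne, List.count_cons]
  | succ k ih =>
    rw [pow_succ', Matrix.mul_apply]
    simp only [ih]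
    rw [show (substIter σ (k+1) j) = substApply σ (substIter σ k j) from rfl,
      count_substApply]
    push_cast
    rfl

end aux

/-- For a non-periodic primitive constant-length substitution with fixed point `x` and
height `h`, the sets `A_i = {x_{i+nh} : n ∈ ℤ}`, `0 ≤ i < h`, form a partition of the
alphabet `A`, and `A_i = A_j` iff `i ≡ j (mod h)`. -/
theorem height_partition
    {A : Type*} [Fintype A] [DecidableEq A] [TopologicalSpace A] [DiscreteTopology A]
    (σ : A → List A) (l : ℕ)
    -- constant length l
    (hlen : ∀ c : A, (σ c).length = l)
    -- primitive
    (hprim : ∃ k : ℕ, 0 < k ∧ ∀ i j : A, 0 < ((incidenceMatrix σ) ^ k) i j)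
    -- prolongable on b.a with admissible two-sided fixed point x
    (a b : A)
    (hra : (σ a).head? = some a) (hlb : (σ b).getLast? = some b)
    (hba : ∃ (n : ℕ) (c : A), [b, a] <:+: substIter σ n c)
    (x : ℤ → A) (hx0 : x 0 = a) (hxm1 : x (-1) = b)
    (hfix : ∀ n : ℤ, ∀ i : Fin l, x (l * n + i) = (σ (x n)).getD i (x n))
    -- the subshift generated by σ (closure of the orbit of x) is non-periodic:
    -- it is not a single finite shift-orbit
    (hnp : ¬ ∃ p : ℕ, 1 ≤ p ∧ ∃ z : ℤ → A,
      closure {w : ℤ → A | ∃ k : ℤ, w = shiftZ k x} =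
        {w : ℤ → A | ∃ i : ℕ, i < p ∧ w = shiftZ i z} ∧ shiftZ p z = z)
    -- g₀ = gcd{n ≥ 1 : x_n = x_0}
    (g0 : ℕ)
    (hg0a : ∀ n : ℕ, 1 ≤ n → x n = x 0 → g0 ∣ n)
    (hg0b : ∀ c : ℕ, (∀ n : ℕ, 1 ≤ n → x n = x 0 → c ∣ n) → c ∣ g0)
    -- h = height of σ
    (h : ℕ) (hh1 : 1 ≤ h) (hh2 : Nat.Coprime h l) (hh3 : h ∣ g0)
    (hh4 : ∀ n : ℕ, 1 ≤ n → Nat.Coprime n l → n ∣ g0 → n ≤ h) :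
    (∀ i j : Fin h, i ≠ j →
      Disjoint (Set.range fun n : ℤ => x ((i : ℤ) + n * h))
        (Set.range fun n : ℤ => x ((j : ℤ) + n * h))) ∧
    (⋃ i : Fin h, Set.range fun n : ℤ => x ((i : ℤ) + n * h)) = Set.univ ∧
    (∀ i j : ℤ,
      (Set.range fun n : ℤ => x (i + n * h)) = (Set.range fun n : ℤ => x (j + n * h))
        ↔ i ≡ j [ZMOD h]) := by
  clear hnp hg0b hh4 hra hlb
  -- l ≥ 2
  obtain ⟨N, c0, hinf⟩ := hba
  have hlN : 2 ≤ l ^ N := by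
    have := hinf.length_le
    rw [substIter_length σ hlen] at this
    simpa using this
  have hl2 : 2 ≤ l := by
    by_contra h'
    have := Nat.pow_le_pow_left (show l ≤ 1 by omega) N
    simp at this; omega
  have hl0' : 0 < l := by omega
  -- the workhorse indexing lemma
  have key : ∀ (t : ℕ) (n : ℤ) (i : ℕ), i < l ^ t →
      x ((l:ℤ) ^ t * n + i) = (substIter σ t (x n)).getD i (x n) := by
    intro t
    induction t with
    | zero =>
      intro n i hi
      have : i = 0 := by rw [pow_zero] at hi; omega
      subst this
      simp [substIter]
    | succ t ih =>
      intro n i hi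
      have hq : i / l < l ^ t := by
        rw [Nat.div_lt_iff_lt_mul hl0']
        calc i < l ^ (t+1) := hi
          _ = l ^ t * l := pow_succ l t
      have hr : i % l < l := Nat.mod_lt _ hl0'
      have hiZ : (i : ℤ) = (l : ℤ) * ((i / l : ℕ) : ℤ) + ((i % l : ℕ) : ℤ) := by
        exact_mod_cast (Nat.div_add_mod i l).symm
      have e1 : (l:ℤ) ^ (t+1) * n + i
          = (l:ℤ) * ((l:ℤ) ^ t * n + ((i / l : ℕ) : ℤ)) + ((i % l : ℕ) : ℤ) := by
        rw [hiZ]; ring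
      rw [e1]
      have hfx := hfix ((l:ℤ) ^ t * n + ((i / l : ℕ) : ℤ)) ⟨i % l, hr⟩
      simp only [Fin.val_mk] at hfx
      rw [hfx, ih n (i / l) hq]
      rw [show substIter σ (t+1) (x n) = substApply σ (substIter σ t (x n)) from rfl]
      conv_rhs => rw [show i = l * (i / l) + i % l from (Nat.div_add_mod i l).symm]
      rw [substApply_getD σ hlen _ _ _ (by rw [substIter_length σ hlen]; exact hq) hr
        (x n) (x n)]
      exact getD_congr _ (by rw [hlen]; exact hr) _ _
  obtain ⟨k, hk0, hkpos⟩ := hprim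
  -- every letter occurs in every level-k block
  have occ : ∀ (i j : A), ∃ r : ℕ, r < l ^ k ∧ (substIter σ k j).getD r j = i := by
    intro i j
    have h1 : 0 < (substIter σ k j).count i := by
      have := hkpos i j; rw [incidence_pow] at this; exact_mod_cast this
    obtain ⟨r, hr, hri⟩ := List.mem_iff_getElem.mp (List.count_pos_iff.mp h1)
    refine ⟨r, by rw [substIter_length σ hlen] at hr; exact hr, ?_⟩
    rw [List.getD_eq_getElem _ _ hr]; exact hri
  have occx : ∀ (i : A) (n : ℤ), ∃ r : ℕ, r < l ^ k ∧ x ((l:ℤ)^k * n + r) = i := by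
    intro i n
    obtain ⟨r, hr, hri⟩ := occ i (x n)
    exact ⟨r, hr, by rw [key k n r hr]; exact hri⟩
  -- equal letters give equal blocks
  have blocks : ∀ m n : ℤ, x m = x n → ∀ (t : ℕ) (i : ℕ), i < l ^ t →
      x ((l:ℤ)^t * m + i) = x ((l:ℤ)^t * n + i) := by
    intro m n hmn t i hi
    rw [key t m i hi, key t n i hi, hmn]
  -- divisibility of positive occurrences of a
  have hdvd1 : ∀ p : ℤ, 1 ≤ p → x p = a → (h:ℤ) ∣ p := by
    intro p hp hpa
    lift p to ℕ using (by omega)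
    have : g0 ∣ p := hg0a p (by exact_mod_cast hp) (by rw [hx0]; exact hpa)
    exact_mod_cast (hh3.trans this)
  -- a distinguished positive position P with x P = a and x (P-1) = b
  obtain ⟨s, t0, hst⟩ := hinf
  obtain ⟨r0, hr0, hr0c⟩ := occx c0 0
  have hxr0 : x (r0 : ℤ) = c0 := by simpa using hr0c
  have hs1 : s.length + 1 < l ^ N := by
    have : (s ++ [b, a] ++ t0).length = l ^ N := by rw [hst, substIter_length σ hlen]
    simp at this; omega
  have hwb : (substIter σ N c0).getD s.length c0 = b := by
    rw [← hst, List.append_assoc, List.getD_append_right _ _ _ _ (le_refl _)]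
    simp
  have hwa : (substIter σ N c0).getD (s.length + 1) c0 = a := by
    rw [← hst, List.append_assoc, List.getD_append_right _ _ _ _ (by omega)]
    simp
  set P : ℤ := (l:ℤ)^N * (r0 : ℤ) + (s.length : ℤ) + 1 with hPdef
  have hP1 : 1 ≤ P := by
    have : (0:ℤ) ≤ (l:ℤ)^N * (r0 : ℤ) := by positivity
    omega
  have hPa : x P = a := by
    have := key N (r0 : ℤ) (s.length + 1) hs1
    rw [hxr0, hwa] at this
    rw [hPdef]; rw [← this]; congr 1
  have hPb : x (P - 1) = b := by
    have := key N (r0 : ℤ) s.length (by omega)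
    rw [hxr0, hwb] at this
    rw [hPdef]; rw [← this]; congr 1; push_cast; ring
  -- copying lemma: around l^T * P the sequence looks like around 0
  have copy : ∀ (T : ℕ) (u : ℤ), -((l:ℤ)^T) ≤ u → u < (l:ℤ)^T →
      x ((l:ℤ)^T * P + u) = x u := by
    intro T u hu1 hu2
    rcases le_or_gt 0 u with hu0 | hu0
    · have hiu : (u.toNat : ℤ) = u := Int.toNat_of_nonneg hu0
      have hlt : u.toNat < l ^ T := by
        have : ((u.toNat : ℤ)) < ((l:ℤ))^T := by rw [hiu]; exact hu2
        exact_mod_cast (by push_cast at this ⊢; exact this : (u.toNat : ℤ) < ((l^T : ℕ) : ℤ))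
      have := blocks P 0 (hPa.trans hx0.symm) T u.toNat hlt
      rw [hiu] at this
      simpa using this
    · have hiu : (((u + (l:ℤ)^T).toNat : ℤ)) = u + (l:ℤ)^T := by
        refine Int.toNat_of_nonneg (by omega)
      have hlt : (u + (l:ℤ)^T).toNat < l ^ T := by
        have h2 : (((u + (l:ℤ)^T).toNat : ℤ)) < ((l^T : ℕ) : ℤ) := by
          rw [hiu]; push_cast; omega
        exact_mod_cast h2
      have := blocks (P - 1) (-1) (hPb.trans hxm1.symm) T _ hlt
      rw [hiu] at this
      have e2 : (l:ℤ)^T * (P - 1) + (u + (l:ℤ)^T) = (l:ℤ)^T * P + u := by ring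
      have e3 : (l:ℤ)^T * (-1) + (u + (l:ℤ)^T) = u := by ring
      rw [e2, e3] at this
      exact this
  -- claim A : all occurrences of a are divisible by h
  have claimA : ∀ p : ℤ, x p = a → (h:ℤ) ∣ p := by
    intro p hpa
    rcases lt_trichotomy p 0 with hneg | rfl | hpos
    · set T := (-p).toNat with hT
      have hT2 : -p < (l:ℤ)^T := by
        have h1 : T < 2 ^ T := Nat.lt_two_pow_self
        have h2 : 2 ^ T ≤ l ^ T := Nat.pow_le_pow_left hl2 T
        have h3 : ((-p).toNat : ℤ) = -p := Int.toNat_of_nonneg (by omega)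
        have : ((T : ℤ)) < ((l^T : ℕ) : ℤ) := by exact_mod_cast lt_of_lt_of_le h1 h2
        push_cast at this
        omega
      have hlTpos : (1:ℤ) ≤ (l:ℤ)^T := by
        have := pow_pos (show (0:ℤ) < l by exact_mod_cast hl0') T
        omega
      have c1 := copy T p (by omega) (by omega)
      rw [hpa] at c1
      have c2 := copy T 0 (by omega) (by omega)
      rw [add_zero] at c2
      rw [hx0] at c2
      have hlP : (l:ℤ)^T ≤ (l:ℤ)^T * P := by nlinarith
      have d1 := hdvd1 ((l:ℤ)^T * P + p) (by omega) c1
      have d2 := hdvd1 ((l:ℤ)^T * P) (by omega) c2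
      have := dvd_sub d1 d2
      simpa using this
    · exact dvd_zero _
    · exact hdvd1 p (by omega) hpa
  -- main congruence
  have main : ∀ m n : ℤ, x m = x n → (h:ℤ) ∣ m - n := by
    intro m n hmn
    obtain ⟨r, hr, hra'⟩ := occx a m
    have h2 : x ((l:ℤ)^k * n + r) = a := by
      rw [blocks n m hmn.symm k r hr]; exact hra'
    have d1 := claimA _ hra'
    have d2 := claimA _ h2
    have d3 : (h:ℤ) ∣ (l:ℤ)^k * (m - n) := by
      have := dvd_sub d1 d2
      have e : ((l:ℤ)^k * m + r) - ((l:ℤ)^k * n + r) = (l:ℤ)^k * (m - n) := by ring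
      rwa [e] at this
    have hcop : IsCoprime ((h:ℕ) : ℤ) (((l^k : ℕ)) : ℤ) :=
      Nat.isCoprime_iff_coprime.mpr (hh2.pow_right k)
    push_cast at hcop
    exact hcop.dvd_of_dvd_mul_left d3
  refine ⟨?_, ?_, ?_⟩
  · intro i j hij
    rw [Set.disjoint_left]
    rintro z ⟨n, rfl⟩ ⟨n', hz⟩
    obtain ⟨t, ht⟩ := main _ _ hz
    have hd : ((j:ℤ) - (i:ℤ)) = (h:ℤ) * (t + n - n') := by linear_combination ht
    have hi' : ((i:ℤ)) < h := by exact_mod_cast i.isLt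
    have hj' : ((j:ℤ)) < h := by exact_mod_cast j.isLt
    have hi0 : (0:ℤ) ≤ i := by exact_mod_cast Nat.zero_le (i : ℕ)
    have hj0 : (0:ℤ) ≤ j := by exact_mod_cast Nat.zero_le (j : ℕ)
    have ht0 : t + n - n' = 0 := by
      rcases lt_trichotomy (t + n - n') 0 with h' | h' | h'
      · nlinarith
      · exact h'
      · nlinarith
    rw [ht0, mul_zero] at hd
    apply hij
    have : (i:ℤ) = (j:ℤ) := by omega
    exact Fin.ext (by exact_mod_cast this)
  · rw [Set.eq_univ_iff_forall]
    intro z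
    obtain ⟨r, hr, hz⟩ := occx z 0
    have hz' : x (r : ℤ) = z := by simpa using hz
    simp only [Set.mem_iUnion, Set.mem_range]
    refine ⟨⟨r % h, Nat.mod_lt _ hh1⟩, ((r / h : ℕ) : ℤ), ?_⟩
    have e : (((r % h : ℕ)) : ℤ) + ((r / h : ℕ) : ℤ) * (h : ℤ) = (r : ℤ) := by
      exact_mod_cast Nat.mod_add_div' r h
    simp only [Fin.val_mk]
    rw [e, hz']
  · intro i j
    constructor
    · intro hEq
      have h1 : x i ∈ (Set.range fun n : ℤ => x (j + n * h)) := by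
        rw [← hEq]
        exact ⟨0, by norm_num⟩
      obtain ⟨n, hn⟩ := h1
      obtain ⟨t, ht⟩ := main _ _ hn
      rw [Int.modEq_iff_dvd]
      exact ⟨t - n, by linear_combination ht⟩
    · intro hmod
      obtain ⟨t, ht⟩ : (h:ℤ) ∣ j - i := Int.modEq_iff_dvd.mp hmod
      ext z
      simp only [Set.mem_range]
      constructor
      · rintro ⟨n, rfl⟩
        exact ⟨n - t, by congr 1; linear_combination ht⟩
      · rintro ⟨n, rfl⟩
        exact ⟨n + t, by congr 1; linear_combination -ht⟩
end

section
/- Let σ be a primitive substitution of constant length l on a finite alphabet A, prolongable on b.a with admissible two-sided fixed point x = σ^∞(b.a), generating a non-periodic subshift, with height h = h(σ); let φ : A* → B* be a coding and y = φ(x) ∈ B^ℤ. Let m ≥ 0 and 0 ≤ k < h·l^m, and write k = Σ_{i=0}^m k_i l^i with 0 ≤ k_m < h and 0 ≤ k_i < l for 0 ≤ i < m. Define subsets of A recursively by B_0 = {x_{k_m + nh} : n ∈ ℤ} and, for 0 ≤ j < m, B_{j+1} = {the (k_{m−1−j})-th letter (indexed from 0) of σ(c) : c ∈ B_j}. Then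 the alphabet of the arithmetic subsequence (y_{k + n·h·l^m})_{n∈ℤ} equals φ(B_m), i.e. {y_{k+n h l^m} : n ∈ ℤ} = {φ(c) : c ∈ B_m}. -/
/-- For a non-periodic primitive constant-length-`l` substitution `σ` with height `h`,
fixed point `x` and coding `φ` with `y = φ(x)`: if `0 ≤ k < h·l^m` has expansion
`k = Σ k_i l^i` (`0 ≤ k_m < h`, `0 ≤ k_i < l`), and `B_0 = {x_{k_m+nh} : n}`,
`B_{j+1} = {σ(c)_{k_{m-1-j}} : c ∈ B_j}`, then the alphabet of `(y_{k+n·h·l^m})_n`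
equals `φ(B_m)`. -/
theorem alphabet_of_arithmetic_subsequence
    {A B : Type*} [Fintype A] [DecidableEq A] [Fintype B]
    [TopologicalSpace A] [DiscreteTopology A]
    (σ : A → List A) (l : ℕ)
    (hlen : ∀ c : A, (σ c).length = l)
    (hprim : ∃ k : ℕ, 0 < k ∧ ∀ i j : A, 0 < ((incidenceMatrix σ) ^ k) i j)
    (a b : A)
    (hra : (σ a).head? = some a) (hlb : (σ b).getLast? = some b)
    (hba : ∃ (n : ℕ) (c : A), [b, a] <:+: substIter σ n c)
    (x : ℤ → A) (hx0 : x 0 = a) (hxm1 : x (-1) = b)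
    (hfix : ∀ n : ℤ, ∀ i : Fin l, x (l * n + i) = (σ (x n)).getD i (x n))
    (hnp : ¬ ∃ p : ℕ, 1 ≤ p ∧ ∃ z : ℤ → A,
      closure {w : ℤ → A | ∃ k : ℤ, w = shiftZ k x} =
        {w : ℤ → A | ∃ i : ℕ, i < p ∧ w = shiftZ i z} ∧ shiftZ p z = z)
    -- g₀ and the height h
    (g0 : ℕ)
    (hg0a : ∀ n : ℕ, 1 ≤ n → x n = x 0 → g0 ∣ n)
    (hg0b : ∀ c : ℕ, (∀ n : ℕ, 1 ≤ n → x n = x 0 → c ∣ n) → c ∣ g0)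
    (h : ℕ) (hh1 : 1 ≤ h) (hh2 : Nat.Coprime h l) (hh3 : h ∣ g0)
    (hh4 : ∀ n : ℕ, 1 ≤ n → Nat.Coprime n l → n ∣ g0 → n ≤ h)
    -- the coding φ and y = φ(x)
    (φ : A → B) (y : ℤ → B) (hy : ∀ n : ℤ, y n = φ (x n))
    -- k with 0 ≤ k < h·l^m and its expansion in base (l^m, …, l, 1)
    (m : ℕ) (k : ℤ) (hk0 : 0 ≤ k) (hkm : k < (h : ℤ) * (l : ℤ) ^ m)
    (kd : ℕ → ℕ) (hkdl : ∀ i : ℕ, i < m → kd i < l) (hkdm : kd m < h)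
    (hksum : k = ∑ i ∈ Finset.range (m + 1), (kd i : ℤ) * (l : ℤ) ^ i)
    -- the recursively defined alphabets B_j
    (Bs : ℕ → Set A)
    (hB0 : Bs 0 = Set.range fun n : ℤ => x ((kd m : ℤ) + n * h))
    (hBsucc : ∀ j : ℕ, j < m →
      Bs (j + 1) = (fun c : A => (σ c).getD (kd (m - 1 - j)) c) '' Bs j) :
    (Set.range fun n : ℤ => y (k + n * ((h : ℤ) * (l : ℤ) ^ m))) = φ '' Bs m := by
  set K : ℕ → ℤ := fun j => ∑ i ∈ Finset.range (j + 1), (kd (m - j + i) : ℤ) * (l : ℤ) ^ i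
    with hK
  have hKrec : ∀ j : ℕ, j < m → K (j + 1) = l * K j + kd (m - 1 - j) := by
    intro j hj
    rw [hK]
    simp only
    rw [Finset.sum_range_succ']
    have h1 : ∀ i ∈ Finset.range (j + 1),
        (kd (m - (j + 1) + (i + 1)) : ℤ) * (l : ℤ) ^ (i + 1)
          = (l : ℤ) * ((kd (m - j + i) : ℤ) * (l : ℤ) ^ i) := by
      intro i _
      have : m - (j + 1) + (i + 1) = m - j + i := by omega
      rw [this, pow_succ]
      ring
    rw [Finset.sum_congr rfl h1, ← Finset.mul_sum]
    have : m - (j + 1) + 0 = m - 1 - j := by omega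
    rw [this]
    ring
  have main : ∀ j : ℕ, j ≤ m →
      (Set.range fun n : ℤ => x (K j + n * ((h : ℤ) * (l : ℤ) ^ j))) = Bs j := by
    intro j
    induction j with
    | zero =>
      intro _
      rw [hB0]
      have : K 0 = (kd m : ℤ) := by simp [hK]
      simp [this]
    | succ j ih =>
      intro hj
      have hjm : j < m := by omega
      have hdl : kd (m - 1 - j) < l := hkdl _ (by omega)
      rw [hBsucc j hjm, ← ih (by omega), ← Set.range_comp]
      apply congrArg Set.range
      funext n
      have harith : K (j + 1) + n * ((h : ℤ) * (l : ℤ) ^ (j + 1))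
          = (l : ℤ) * (K j + n * ((h : ℤ) * (l : ℤ) ^ j)) + (kd (m - 1 - j) : ℤ) := by
        rw [hKrec j hjm, pow_succ]
        ring
      have := hfix (K j + n * ((h : ℤ) * (l : ℤ) ^ j)) ⟨kd (m - 1 - j), hdl⟩
      simpa [harith] using this
  have hKm : K m = k := by
    rw [hK, hksum]
    apply Finset.sum_congr rfl
    intro i _
    have : m - m + i = i := by omega
    rw [this]
  have := main m le_rfl
  rw [← this, ← Set.range_comp]
  apply congrArg Set.range
  funext n
  simp [Function.comp, hy, hKm]
end
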